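/- Let $0 < \ell \le n/2$ and let $s(z,\bar z) = \sum s_{\alpha\bar\beta\gamma\bar\delta} z_\alpha\bar z_\beta z_\gamma \bar z_\delta$ be a real-valued bihomogeneous polynomial of bidegree $(2,2)$ satisfying the symmetry relations of a Chern-Moser-Weyl tensor and $\triangle_\ell s \equiv 0$. If $s(z,\bar z) = 0$ for all $z$ on the null cone $\mathcal{C}_\ell = \{|z|_\ell^2 = 0\}$, then $s \equiv 0$. -/

import Mathlib

open scoped BigOperators ComplexConjugate

noncomputable section

/-- The sign `ε_j`: `-1` for the first `ℓ` indices, `+1` afterwards. -/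
def eps (n ℓ : ℕ) (j : Fin n) : ℂ := if (j : ℕ) < ℓ then -1 else 1

/-- The matrix `g_0^{β̄ α}`: diagonal with entries `-1` (first `ℓ`) and `+1`. -/
def g0 (n ℓ : ℕ) (β α : Fin n) : ℂ := if β = α then eps n ℓ β else 0

/-- The polarized bidegree (2,2) polynomial
`s(z,w) = ∑ s_{α β̄ γ δ̄} z_α w_β z_γ w_δ`, where `w` plays the role of `z̄`. -/
def quartic {n : ℕ} (s : Fin n → Fin n → Fin n → Fin n → ℂ) :
    (Fin n → ℂ) → (Fin n → ℂ) → ℂ :=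
  fun z w => ∑ α : Fin n, ∑ β : Fin n, ∑ γ : Fin n, ∑ δ : Fin n,
    s α β γ δ * z α * w β * z γ * w δ

/-- Holomorphic partial derivative `∂/∂z_j` of a polarized function `f(z,w)`. -/
def Dz {n : ℕ} (f : (Fin n → ℂ) → (Fin n → ℂ) → ℂ) (j : Fin n) :
    (Fin n → ℂ) → (Fin n → ℂ) → ℂ :=
  fun z w => fderiv ℂ (fun z' => f z' w) z (Pi.single j 1)

/-- Antiholomorphic partial derivative `∂/∂z̄_j`, acting on the second (polarized) slot. -/
def Dw {n : ℕ} (f : (Fin n → ℂ) → (Fin n → ℂ) → ℂ) (j : Fin n) :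
    (Fin n → ℂ) → (Fin n → ℂ) → ℂ :=
  fun z w => fderiv ℂ (fun w' => f z w') w (Pi.single j 1)

/-- The signed Laplacian `△_ℓ = -∑_{j≤ℓ} ∂²/∂z_j∂z̄_j + ∑_{j>ℓ} ∂²/∂z_j∂z̄_j`. -/
def lapL {n : ℕ} (ℓ : ℕ) (f : (Fin n → ℂ) → (Fin n → ℂ) → ℂ) :
    (Fin n → ℂ) → (Fin n → ℂ) → ℂ :=
  fun z w => ∑ j : Fin n, eps n ℓ j * Dw (Dz f j) j z w

/-- The signed norm `|z|_ℓ² = -∑_{j≤ℓ}|z_j|² + ∑_{j>ℓ}|z_j|²` (as a complex number). -/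
def nSq (n ℓ : ℕ) (z : Fin n → ℂ) : ℂ := ∑ j : Fin n, eps n ℓ j * z j * conj (z j)

/-- A bidegree (1,1) polynomial `∑_{α,β} a_{α β̄} z_α z̄_β`. -/
def herm {n : ℕ} (a : Fin n → Fin n → ℂ) (z : Fin n → ℂ) : ℂ :=
  ∑ α : Fin n, ∑ β : Fin n, a α β * z α * conj (z β)
namespace Stmt5

variable {n ℓ : ℕ}

lemma eps_mul_self (j : Fin n) : eps n ℓ j * eps n ℓ j = 1 := by
  unfold eps; split <;> ring

lemma eps_cases (j : Fin n) : eps n ℓ j = -1 ∨ eps n ℓ j = 1 := by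
  unfold eps; split <;> simp

/-- tuples -/
abbrev Tup (n : ℕ) := Fin n × Fin n × Fin n × Fin n

def mono (z : Fin n → ℂ) (t : Tup n) : ℂ :=
  z t.1 * conj (z t.2.1) * z t.2.2.1 * conj (z t.2.2.2)

def QP (s : Fin n → Fin n → Fin n → Fin n → ℂ) (P : Tup n → Prop) (z : Fin n → ℂ) : ℂ :=
  ∑ t : Tup n, Set.indicator {t | P t} (fun t => s t.1 t.2.1 t.2.2.1 t.2.2.2 * mono z t) t

lemma QP_top (s : Fin n → Fin n → Fin n → Fin n → ℂ) (z : Fin n → ℂ) :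
    QP s (fun _ => True) z = quartic s z (fun j => conj (z j)) := by
  unfold QP quartic mono
  rw [Fintype.sum_prod_type]
  refine Finset.sum_congr rfl fun α _ => ?_
  rw [Fintype.sum_prod_type]
  refine Finset.sum_congr rfl fun β _ => ?_
  rw [Fintype.sum_prod_type]
  refine Finset.sum_congr rfl fun γ _ => ?_
  refine Finset.sum_congr rfl fun δ _ => ?_
  rw [Set.indicator_of_mem (by trivial)]
  simp only
  ring

/-- weights -/
def wgt (t : Tup n) (j : Fin n) : ℤ :=
  (if t.1 = j then 1 else 0) + (if t.2.2.1 = j then 1 else 0)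
  - (if t.2.1 = j then 1 else 0) - (if t.2.2.2 = j then 1 else 0)

def pcnt (t : Tup n) (j : Fin n) : ℕ :=
  (if t.1 = j then 1 else 0) + (if t.2.2.1 = j then 1 else 0)

def mcnt (t : Tup n) (j : Fin n) : ℕ :=
  (if t.2.1 = j then 1 else 0) + (if t.2.2.2 = j then 1 else 0)

lemma pcnt_le (t : Tup n) (j : Fin n) : pcnt t j ≤ 2 := by
  unfold pcnt; split <;> split <;> omega

lemma mcnt_le (t : Tup n) (j : Fin n) : mcnt t j ≤ 2 := by
  unfold mcnt; split <;> split <;> omega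

lemma wgt_eq (t : Tup n) (j : Fin n) : wgt t j = (pcnt t j : ℤ) - (mcnt t j : ℤ) := by
  unfold wgt pcnt mcnt; split <;> split <;> split <;> split <;> push_cast <;> omega

lemma wgt_bounds (t : Tup n) (j : Fin n) : -2 ≤ wgt t j ∧ wgt t j ≤ 2 := by
  rw [wgt_eq]
  have := pcnt_le t j; have := mcnt_le t j
  omega


/-! ### Trace lemma -/

section Trace

variable (s : Fin n → Fin n → Fin n → Fin n → ℂ)

def K (w : Fin n → ℂ) (α γ : Fin n) : ℂ := ∑ β : Fin n, ∑ δ : Fin n, s α β γ δ * w β * w δ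

lemma quartic_rw (z w : Fin n → ℂ) :
    quartic s z w = ∑ α : Fin n, ∑ γ : Fin n, K s w α γ * (z α * z γ) := by
  unfold quartic K
  refine Finset.sum_congr rfl fun α _ => ?_
  rw [Finset.sum_comm]
  refine Finset.sum_congr rfl fun γ _ => ?_
  rw [Finset.sum_mul]
  refine Finset.sum_congr rfl fun β _ => ?_
  rw [Finset.sum_mul]
  refine Finset.sum_congr rfl fun δ _ => ?_
  ring

lemma hasDz (w z : Fin n → ℂ) :
    HasFDerivAt (fun z : Fin n → ℂ => ∑ α : Fin n, ∑ γ : Fin n, K s w α γ * (z α * z γ))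
      (∑ α : Fin n, ∑ γ : Fin n, K s w α γ •
        (z α • (ContinuousLinearMap.proj γ : (Fin n → ℂ) →L[ℂ] ℂ)
          + z γ • (ContinuousLinearMap.proj α : (Fin n → ℂ) →L[ℂ] ℂ))) z := by
  apply HasFDerivAt.fun_sum; intro α _
  apply HasFDerivAt.fun_sum; intro γ _
  have hα : HasFDerivAt (fun z : Fin n → ℂ => z α)
      (ContinuousLinearMap.proj α : (Fin n → ℂ) →L[ℂ] ℂ) z :=
    (ContinuousLinearMap.proj α : (Fin n → ℂ) →L[ℂ] ℂ).hasFDerivAt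
  have hγ : HasFDerivAt (fun z : Fin n → ℂ => z γ)
      (ContinuousLinearMap.proj γ : (Fin n → ℂ) →L[ℂ] ℂ) z :=
    (ContinuousLinearMap.proj γ : (Fin n → ℂ) →L[ℂ] ℂ).hasFDerivAt
  exact (hα.mul hγ).const_mul _

lemma Dz_quartic (j : Fin n) (z w : Fin n → ℂ) :
    Dz (quartic s) j z w = ∑ α : Fin n, z α * (K s w α j + K s w j α) := by
  have h1 : (fun z' => quartic s z' w)
      = fun z' : Fin n → ℂ => ∑ α : Fin n, ∑ γ : Fin n, K s w α γ * (z' α * z' γ) :=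
    funext fun z' => quartic_rw s z' w
  show fderiv ℂ (fun z' => quartic s z' w) z (Pi.single j 1) = _
  rw [h1, (hasDz s w z).fderiv]
  simp only [ContinuousLinearMap.coe_sum', Finset.sum_apply, ContinuousLinearMap.add_apply,
    ContinuousLinearMap.smul_apply, ContinuousLinearMap.proj_apply, Pi.single_apply,
    smul_eq_mul]
  have key : ∀ α γ : Fin n,
      K s w α γ * (z α * (if γ = j then (1:ℂ) else 0) + z γ * (if α = j then (1:ℂ) else 0))
      = (if γ = j then K s w α γ * z α else 0) + (if α = j then K s w α γ * z γ else 0) := by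
    intro α γ; split <;> split <;> ring
  simp only [key, Finset.sum_add_distrib]
  have h2 : ∀ α : Fin n, (∑ γ : Fin n, if γ = j then K s w α γ * z α else 0)
      = K s w α j * z α := by
    intro α; rw [Finset.sum_ite_eq']; simp
  have h3 : (∑ α : Fin n, ∑ γ : Fin n, if α = j then K s w α γ * z γ else 0)
      = ∑ γ : Fin n, K s w j γ * z γ := by
    rw [Finset.sum_comm]
    refine Finset.sum_congr rfl fun γ _ => ?_
    rw [Finset.sum_ite_eq']; simp
  rw [Finset.sum_congr rfl fun α _ => h2 α, h3, ← Finset.sum_add_distrib]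
  refine Finset.sum_congr rfl fun α _ => ?_
  ring

def C2 (z : Fin n → ℂ) (j α β δ : Fin n) : ℂ := z α * (s α β j δ + s j β α δ)

lemma g_rw (j : Fin n) (z w' : Fin n → ℂ) :
    (∑ α : Fin n, z α * (K s w' α j + K s w' j α))
      = ∑ α : Fin n, ∑ β : Fin n, ∑ δ : Fin n, C2 s z j α β δ * (w' β * w' δ) := by
  refine Finset.sum_congr rfl fun α _ => ?_
  unfold K C2
  rw [← Finset.sum_add_distrib, Finset.mul_sum]
  refine Finset.sum_congr rfl fun β _ => ?_
  rw [← Finset.sum_add_distrib, Finset.mul_sum]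
  refine Finset.sum_congr rfl fun δ _ => ?_
  ring

lemma hasDw (j : Fin n) (z w : Fin n → ℂ) :
    HasFDerivAt (fun w' : Fin n → ℂ =>
        ∑ α : Fin n, ∑ β : Fin n, ∑ δ : Fin n, C2 s z j α β δ * (w' β * w' δ))
      (∑ α : Fin n, ∑ β : Fin n, ∑ δ : Fin n, C2 s z j α β δ •
        (w β • (ContinuousLinearMap.proj δ : (Fin n → ℂ) →L[ℂ] ℂ)
          + w δ • (ContinuousLinearMap.proj β : (Fin n → ℂ) →L[ℂ] ℂ))) w := by
  apply HasFDerivAt.fun_sum; intro α _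
  apply HasFDerivAt.fun_sum; intro β _
  apply HasFDerivAt.fun_sum; intro δ _
  have hβ : HasFDerivAt (fun w : Fin n → ℂ => w β)
      (ContinuousLinearMap.proj β : (Fin n → ℂ) →L[ℂ] ℂ) w :=
    (ContinuousLinearMap.proj β : (Fin n → ℂ) →L[ℂ] ℂ).hasFDerivAt
  have hδ : HasFDerivAt (fun w : Fin n → ℂ => w δ)
      (ContinuousLinearMap.proj δ : (Fin n → ℂ) →L[ℂ] ℂ) w :=
    (ContinuousLinearMap.proj δ : (Fin n → ℂ) →L[ℂ] ℂ).hasFDerivAt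
  exact (hβ.mul hδ).const_mul _

lemma DwDz_quartic (j : Fin n) (z w : Fin n → ℂ) :
    Dw (Dz (quartic s) j) j z w
      = (∑ α : Fin n, ∑ β : Fin n, C2 s z j α β j * w β)
        + ∑ α : Fin n, ∑ δ : Fin n, C2 s z j α j δ * w δ := by
  have h1 : (fun w' => Dz (quartic s) j z w')
      = fun w' : Fin n → ℂ =>
        ∑ α : Fin n, ∑ β : Fin n, ∑ δ : Fin n, C2 s z j α β δ * (w' β * w' δ) := by
    funext w'
    rw [Dz_quartic s j z w', g_rw s j z w']
  show fderiv ℂ (fun w' => Dz (quartic s) j z w') w (Pi.single j 1) = _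
  rw [h1, (hasDw s j z w).fderiv]
  simp only [ContinuousLinearMap.coe_sum', Finset.sum_apply, ContinuousLinearMap.add_apply,
    ContinuousLinearMap.smul_apply, ContinuousLinearMap.proj_apply, Pi.single_apply,
    smul_eq_mul]
  have key : ∀ α β δ : Fin n,
      C2 s z j α β δ * (w β * (if δ = j then (1:ℂ) else 0) + w δ * (if β = j then (1:ℂ) else 0))
      = (if δ = j then C2 s z j α β δ * w β else 0)
        + (if β = j then C2 s z j α β δ * w δ else 0) := by
    intro α β δ; split <;> split <;> ring
  simp only [key, Finset.sum_add_distrib]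
  congr 1
  · refine Finset.sum_congr rfl fun α _ => ?_
    refine Finset.sum_congr rfl fun β _ => ?_
    rw [Finset.sum_ite_eq']; simp
  · refine Finset.sum_congr rfl fun α _ => ?_
    rw [Finset.sum_comm]
    refine Finset.sum_congr rfl fun δ _ => ?_
    rw [Finset.sum_ite_eq']; simp

def TR (γ δ : Fin n) : ℂ := ∑ j : Fin n, eps n ℓ j * s j j γ δ

lemma hermT_vanish
    (hsym1 : ∀ α β γ δ, s α β γ δ = s γ β α δ)
    (hsym2 : ∀ α β γ δ, s α β γ δ = s γ δ α β)
    (hharm : ∀ z : Fin n → ℂ, lapL ℓ (quartic s) z (fun j => conj (z j)) = 0)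
    (z : Fin n → ℂ) :
    ∑ α : Fin n, ∑ β : Fin n, TR (ℓ := ℓ) s α β * z α * conj (z β) = 0 := by
  have hsd : ∀ α β γ δ, s α β γ δ = s α δ γ β := by
    intro α β γ δ; rw [hsym2, hsym1, hsym2]
  have h := hharm z
  unfold lapL at h
  have hrw : ∀ j : Fin n, Dw (Dz (quartic s) j) j z (fun i => conj (z i))
      = 4 * ∑ α : Fin n, ∑ β : Fin n, s j j α β * z α * conj (z β) := by
    intro j
    rw [DwDz_quartic]
    unfold C2
    have e1 : ∀ α β : Fin n, z α * (s α β j j + s j β α j) * conj (z β)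
        = 2 * (s j j α β * z α * conj (z β)) := by
      intro α β
      have r1 : s α β j j = s j j α β := by rw [hsym2]
      have r2 : s j β α j = s j j α β := by rw [hsd]
      rw [r1, r2]; ring
    have e2 : ∀ α δ : Fin n, z α * (s α j j δ + s j j α δ) * conj (z δ)
        = 2 * (s j j α δ * z α * conj (z δ)) := by
      intro α δ
      have r1 : s α j j δ = s j j α δ := by rw [hsym1]
      rw [r1]; ring
    rw [Finset.mul_sum]
    rw [← Finset.sum_add_distrib]
    refine Finset.sum_congr rfl fun α _ => ?_
    rw [Finset.mul_sum, ← Finset.sum_add_distrib]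
    refine Finset.sum_congr rfl fun β _ => ?_
    calc C2 s z j α β j * conj (z β) + C2 s z j α j β * conj (z β)
        = z α * (s α β j j + s j β α j) * conj (z β)
          + z α * (s α j j β + s j j α β) * conj (z β) := by unfold C2; ring
      _ = 4 * (s j j α β * z α * conj (z β)) := by rw [e1, e2]; ring
  have E : ∑ j : Fin n, eps n ℓ j * Dw (Dz (quartic s) j) j z (fun i => conj (z i))
      = 4 * ∑ α : Fin n, ∑ β : Fin n, TR (ℓ := ℓ) s α β * z α * conj (z β) := by
    calc ∑ j : Fin n, eps n ℓ j * Dw (Dz (quartic s) j) j z (fun i => conj (z i))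
        = ∑ j : Fin n, ∑ α : Fin n, ∑ β : Fin n,
            4 * (eps n ℓ j * s j j α β * z α * conj (z β)) := by
          refine Finset.sum_congr rfl fun j _ => ?_
          rw [hrw j]
          simp only [Finset.mul_sum]
          refine Finset.sum_congr rfl fun α _ => Finset.sum_congr rfl fun β _ => ?_
          ring
      _ = ∑ α : Fin n, ∑ j : Fin n, ∑ β : Fin n,
            4 * (eps n ℓ j * s j j α β * z α * conj (z β)) := Finset.sum_comm
      _ = ∑ α : Fin n, ∑ β : Fin n, ∑ j : Fin n,
            4 * (eps n ℓ j * s j j α β * z α * conj (z β)) :=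
          Finset.sum_congr rfl fun α _ => Finset.sum_comm
      _ = 4 * ∑ α : Fin n, ∑ β : Fin n, TR (ℓ := ℓ) s α β * z α * conj (z β) := by
          rw [Finset.mul_sum]
          refine Finset.sum_congr rfl fun α _ => ?_
          rw [Finset.mul_sum]
          refine Finset.sum_congr rfl fun β _ => ?_
          unfold TR
          rw [Finset.sum_mul, Finset.sum_mul, Finset.mul_sum]
          try exact Finset.sum_congr rfl fun j _ => by ring
  rw [E] at h
  rcases mul_eq_zero.mp h with h4 | hS
  · norm_num at h4
  · exact hS

lemma sum_ite_push {P : Prop} [Decidable P] (f : Fin n → ℂ) :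
    (∑ β : Fin n, if P then f β else 0) = if P then ∑ β : Fin n, f β else 0 := by
  split <;> simp

lemma herm_eval_two (T : Fin n → Fin n → ℂ) (γ δ : Fin n) (hgd : γ ≠ δ) (c d : ℂ) :
    ∑ α : Fin n, ∑ β : Fin n, T α β * ((Pi.single γ c + Pi.single δ d : Fin n → ℂ) α)
        * conj ((Pi.single γ c + Pi.single δ d : Fin n → ℂ) β)
      = T γ γ * (c * conj c) + T γ δ * (c * conj d)
        + (T δ γ * (d * conj c) + T δ δ * (d * conj d)) := by
  have hz : ∀ α : Fin n, (Pi.single γ c + Pi.single δ d : Fin n → ℂ) α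
      = (if α = γ then c else 0) + (if α = δ then d else 0) := by
    intro α; simp [Pi.single_apply, Pi.add_apply]
  simp only [hz]
  have expand : ∀ α β : Fin n,
      T α β * ((if α = γ then c else 0) + (if α = δ then d else 0))
        * conj ((if β = γ then c else 0) + (if β = δ then d else 0))
      = ((if α = γ then (if β = γ then T α β * (c * conj c) else 0)
            + (if β = δ then T α β * (c * conj d) else 0) else 0)
        + (if α = δ then (if β = γ then T α β * (d * conj c) else 0)
            + (if β = δ then T α β * (d * conj d) else 0) else 0)) := by
    intro α β
    by_cases h1 : α = γ <;> by_cases h2 : α = δ <;> by_cases h3 : β = γ <;> by_cases h4 : β = δ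
    all_goals try (exact absurd (h1.symm.trans h2) hgd)
    all_goals try (exact absurd (h3.symm.trans h4) hgd)
    all_goals simp [h1, h2, h3, h4, hgd, Ne.symm hgd, map_add, map_zero]
    all_goals try ring
  simp only [expand]
  rw [Finset.sum_congr rfl fun α _ => Finset.sum_add_distrib, Finset.sum_add_distrib]
  congr 1
  · rw [Finset.sum_congr rfl fun α _ => sum_ite_push _, Finset.sum_ite_eq' Finset.univ γ]
    simp only [Finset.mem_univ, if_true]
    rw [Finset.sum_add_distrib, Finset.sum_ite_eq' Finset.univ γ, Finset.sum_ite_eq' Finset.univ δ]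
    simp
  · rw [Finset.sum_congr rfl fun α _ => sum_ite_push _, Finset.sum_ite_eq' Finset.univ δ]
    simp only [Finset.mem_univ, if_true]
    rw [Finset.sum_add_distrib, Finset.sum_ite_eq' Finset.univ γ, Finset.sum_ite_eq' Finset.univ δ]
    simp

lemma TR_eq_zero
    (hsym1 : ∀ α β γ δ, s α β γ δ = s γ β α δ)
    (hsym2 : ∀ α β γ δ, s α β γ δ = s γ δ α β)
    (hharm : ∀ z : Fin n → ℂ, lapL ℓ (quartic s) z (fun j => conj (z j)) = 0)
    (hn : 2 ≤ n) :
    ∀ γ δ : Fin n, TR (ℓ := ℓ) s γ δ = 0 := by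
  have hv := hermT_vanish (ℓ := ℓ) s hsym1 hsym2 hharm
  have key : ∀ γ δ : Fin n, γ ≠ δ →
      TR (ℓ := ℓ) s γ γ = 0 ∧ TR (ℓ := ℓ) s γ δ = 0 := by
    intro γ δ hgd
    have h10 := hv (Pi.single γ (1:ℂ) + Pi.single δ (0:ℂ))
    rw [herm_eval_two (TR (ℓ := ℓ) s) γ δ hgd 1 0] at h10
    simp only [map_zero, map_one, mul_zero, zero_mul, mul_one, one_mul, add_zero, zero_add] at h10
    have h01 := hv (Pi.single γ (0:ℂ) + Pi.single δ (1:ℂ))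
    rw [herm_eval_two (TR (ℓ := ℓ) s) γ δ hgd 0 1] at h01
    simp only [map_zero, map_one, mul_zero, zero_mul, mul_one, one_mul, add_zero, zero_add] at h01
    have h11 := hv (Pi.single γ (1:ℂ) + Pi.single δ (1:ℂ))
    rw [herm_eval_two (TR (ℓ := ℓ) s) γ δ hgd 1 1] at h11
    simp only [map_one, mul_one, one_mul] at h11
    have h1I := hv (Pi.single γ (1:ℂ) + Pi.single δ (Complex.I))
    rw [herm_eval_two (TR (ℓ := ℓ) s) γ δ hgd 1 Complex.I] at h1I
    simp only [map_one, mul_one, one_mul, Complex.conj_I, Complex.I_mul_I] at h1I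
    refine ⟨h10, ?_⟩
    linear_combination (1/2 : ℂ) * (h11 - h10 - h01)
      + (1/2 : ℂ) * Complex.I * (h1I - h10 - h01)
      + ((TR (ℓ := ℓ) s γ δ + Complex.I * TR (ℓ := ℓ) s δ δ - TR (ℓ := ℓ) s δ γ) * (1/2 : ℂ))
        * Complex.I_sq
  intro γ δ
  by_cases hgd : γ = δ
  · subst hgd
    obtain ⟨δ', hδ'⟩ := Fintype.exists_ne_of_one_lt_card (by simp; omega) γ
    exact (key γ δ' (Ne.symm hδ')).1
  · exact (key γ δ hgd).2

end Trace

/-! ### Extraction lemma -/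

section Ext

variable (s : Fin n → Fin n → Fin n → Fin n → ℂ)

lemma circle_ne (t : ℝ) : (1 - (t:ℂ) * Complex.I) ≠ 0 := by
  intro h
  have := congrArg Complex.re h
  simp [Complex.sub_re, Complex.mul_re, Complex.ofReal_re, Complex.I_re, Complex.I_im,
    Complex.ofReal_im] at this

lemma circle_ne' (t : ℝ) : (1 + (t:ℂ) * Complex.I) ≠ 0 := by
  have := circle_ne (-t)
  push_cast at this
  intro h; apply this; linear_combination h

def circ (t : ℝ) : ℂ := (1 + (t:ℂ) * Complex.I) / (1 - (t:ℂ) * Complex.I)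

lemma circ_unit (t : ℝ) : circ t * conj (circ t) = 1 := by
  unfold circ
  rw [map_div₀, map_add, map_mul, map_one, Complex.conj_I, Complex.conj_ofReal]
  rw [map_sub, map_mul, map_one, Complex.conj_I, Complex.conj_ofReal]
  rw [div_mul_div_comm]
  rw [div_eq_one_iff_eq (by
    intro h
    rcases mul_eq_zero.mp h with h' | h'
    · exact circle_ne t h'
    · apply circle_ne' t; linear_combination h')]
  ring

lemma circ_inj : Function.Injective circ := by
  intro a b h
  unfold circ at h
  rw [div_eq_div_iff (circle_ne a) (circle_ne b)] at h
  have h2 : (2:ℂ) * Complex.I * (a:ℂ) = 2 * Complex.I * (b:ℂ) := by linear_combination h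
  have h3 : (a:ℂ) = b := by
    have h4 : (2:ℂ) * Complex.I ≠ 0 := by simp [Complex.I_ne_zero]
    exact mul_left_cancel₀ h4 h2
  exact_mod_cast h3

lemma mono_update (z : Fin n → ℂ) (j : Fin n) (ω : ℂ) (t : Tup n) :
    mono (Function.update z j (ω * z j)) t
      = ω ^ (pcnt t j) * (conj ω) ^ (mcnt t j) * mono z t := by
  obtain ⟨α, β, γ, δ⟩ := t
  unfold mono pcnt mcnt
  simp only [Function.update_apply]
  by_cases h1 : α = j <;> by_cases h2 : β = j <;> by_cases h3 : γ = j <;> by_cases h4 : δ = j <;>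
    simp [h1, h2, h3, h4, map_mul] <;> ring

lemma nSq_update (z : Fin n → ℂ) (j : Fin n) (ω : ℂ) (hω : ω * conj ω = 1) :
    nSq n ℓ (Function.update z j (ω * z j)) = nSq n ℓ z := by
  unfold nSq
  refine Finset.sum_congr rfl fun i _ => ?_
  by_cases h : i = j
  · subst h
    simp only [Function.update_self, map_mul]
    linear_combination (eps n ℓ i * z i * conj (z i)) * hω
  · simp [Function.update_apply, h]

lemma ext_lemma {P : Tup n → Prop}
    (hV : ∀ z : Fin n → ℂ, nSq n ℓ z = 0 → QP s P z = 0) (j : Fin n) (d : ℤ) :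
    ∀ z : Fin n → ℂ, nSq n ℓ z = 0 → QP s (fun t => P t ∧ wgt t j = d) z = 0 := by
  intro z hz
  by_cases hd : -2 ≤ d ∧ d ≤ 2
  case neg =>
    apply Finset.sum_eq_zero
    intro t _
    rw [Set.indicator_of_notMem]
    intro ht
    have hb := wgt_bounds t j
    rw [ht.2] at hb
    exact hd hb
  case pos =>
    set c : ℕ → ℂ := fun k => QP s (fun t => P t ∧ wgt t j = (k:ℤ) - 2) z with hc
    have key : ∀ ω : ℂ, ω * conj ω = 1 → ∑ k ∈ Finset.range 5, c k * ω ^ k = 0 := by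
      intro ω hω
      have hz' : nSq n ℓ (Function.update z j (ω * z j)) = 0 := by
        rw [nSq_update (ℓ := ℓ) z j ω hω]; exact hz
      have hQ := hV _ hz'
      have main : ∑ k ∈ Finset.range 5, c k * ω ^ k
          = ω ^ 2 * QP s P (Function.update z j (ω * z j)) := by
        rw [hc]
        unfold QP
        simp only [Finset.sum_mul, Finset.mul_sum]
        rw [Finset.sum_comm]
        refine Finset.sum_congr rfl fun t _ => ?_
        have hpow : ω ^ 2 * (ω ^ pcnt t j * (conj ω) ^ mcnt t j)
            = ω ^ ((wgt t j + 2).toNat) := by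
          have h1 : (wgt t j + 2).toNat + mcnt t j = pcnt t j + 2 := by
            have hw := wgt_eq t j
            have := mcnt_le t j
            have := pcnt_le t j
            omega
          calc ω ^ 2 * (ω ^ pcnt t j * (conj ω) ^ mcnt t j)
              = ω ^ (pcnt t j + 2) * (conj ω) ^ mcnt t j := by rw [pow_add]; ring
            _ = ω ^ ((wgt t j + 2).toNat) * (ω ^ mcnt t j * (conj ω) ^ mcnt t j) := by
                rw [← h1, pow_add]; ring
            _ = ω ^ ((wgt t j + 2).toNat) * (ω * conj ω) ^ mcnt t j := by rw [mul_pow]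
            _ = ω ^ ((wgt t j + 2).toNat) := by rw [hω, one_pow, mul_one]
        by_cases hP : P t
        · rw [Finset.sum_eq_single ((wgt t j + 2).toNat)]
          · rw [Set.indicator_of_mem, Set.indicator_of_mem (show t ∈ {t | P t} from hP)]
            · rw [mono_update]
              rw [← hpow]
              ring
            · refine ⟨hP, ?_⟩
              have hb := wgt_bounds t j
              omega
          · intro k _ hne
            rw [Set.indicator_of_notMem, zero_mul]
            intro hmem
            apply hne
            have := hmem.2
            omega
          · intro habs
            exfalso
            apply habs
            rw [Finset.mem_range]
            have hb := wgt_bounds t j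
            omega
        · rw [Set.indicator_of_notMem (show t ∉ {t | P t} from hP)]
          rw [Finset.sum_eq_zero, mul_zero]
          intro k _
          rw [Set.indicator_of_notMem, zero_mul]
          intro hmem
          exact hP hmem.1
      rw [main, hQ, mul_zero]
    have hroot : ∀ t : ℝ, (∑ k ∈ Finset.range 5,
        Polynomial.C (c k) * Polynomial.X ^ k : Polynomial ℂ).IsRoot (circ t) := by
      intro t
      have h := key (circ t) (circ_unit t)
      simpa [Polynomial.IsRoot, Polynomial.eval_finset_sum] using h
    have hp0 : (∑ k ∈ Finset.range 5,
        Polynomial.C (c k) * Polynomial.X ^ k : Polynomial ℂ) = 0 :=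
      Polynomial.eq_zero_of_infinite_isRoot _
        (Set.infinite_of_injective_forall_mem circ_inj hroot)
    have hcoeff : ∀ k, k ∈ Finset.range 5 → c k = 0 := by
      intro k hk
      have h := congrArg (fun q : Polynomial ℂ => q.coeff k) hp0
      simp only [Polynomial.finset_sum_coeff, Polynomial.coeff_C_mul, Polynomial.coeff_X_pow,
        Polynomial.coeff_zero, mul_ite, mul_one, mul_zero] at h
      rwa [Finset.sum_ite_eq (Finset.range 5) k (fun k => c k), if_pos hk] at h
    have hkd : (((d + 2).toNat : ℤ)) - 2 = d := by omega
    have hres := hcoeff (d + 2).toNat (by rw [Finset.mem_range]; omega)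
    rw [hc] at hres
    simp only [hkd] at hres
    exact hres

end Ext

/-! ### Null test vectors -/

section Vectors

def indV (x : Fin n) : Fin n → ℝ := fun j => if j = x then 1 else 0

def prt (l : ℕ) (p0 q0 x : Fin n) : Fin n := if (x:ℕ) < l then q0 else p0

def nv (l : ℕ) (p0 q0 : Fin n) (x : Fin n) : Fin n → ℝ := indV x + indV (prt l p0 q0 x)

def sqv (v : Fin n → ℝ) : Fin n → ℂ := fun j => ((Real.sqrt (v j) : ℝ) : ℂ)

def ED (l : ℕ) (v : Fin n → ℝ) : ℂ := ∑ j : Fin n, eps n l j * ((v j : ℝ) : ℂ)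

variable {p0 q0 : Fin n}

lemma indV_nonneg (x j : Fin n) : 0 ≤ indV x j := by
  unfold indV; split <;> norm_num

lemma indV_self (x : Fin n) : indV x x = 1 := by unfold indV; simp

lemma nv_nonneg (x j : Fin n) : 0 ≤ nv ℓ p0 q0 x j :=
  add_nonneg (indV_nonneg x j) (indV_nonneg _ j)

lemma nv_self (x : Fin n) : 1 ≤ nv ℓ p0 q0 x x := by
  unfold nv
  have := indV_nonneg (prt ℓ p0 q0 x) x
  have := indV_self x
  simp only [Pi.add_apply]
  linarith

lemma eps_prt (hp0 : eps n ℓ p0 = -1) (hq0 : eps n ℓ q0 = 1) (x : Fin n) :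
    eps n ℓ (prt ℓ p0 q0 x) = - eps n ℓ x := by
  by_cases h : (x:ℕ) < ℓ
  · unfold prt; rw [if_pos h, hq0]; unfold eps; rw [if_pos h]; ring
  · unfold prt; rw [if_neg h, hp0]; unfold eps; rw [if_neg h]

lemma ED_add (v w : Fin n → ℝ) : ED ℓ (v + w) = ED ℓ v + ED ℓ w := by
  unfold ED
  rw [← Finset.sum_add_distrib]
  refine Finset.sum_congr rfl fun j _ => ?_
  simp only [Pi.add_apply]
  push_cast
  ring

lemma ED_indV (x : Fin n) : ED ℓ (indV x) = eps n ℓ x := by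
  unfold ED indV
  have : ∀ j : Fin n, eps n ℓ j * (((if j = x then (1:ℝ) else 0) : ℝ) : ℂ)
      = if j = x then eps n ℓ j else 0 := by
    intro j; split <;> simp
  rw [Finset.sum_congr rfl fun j _ => this j, Finset.sum_ite_eq' Finset.univ x]
  simp

lemma ED_nv (hp0 : eps n ℓ p0 = -1) (hq0 : eps n ℓ q0 = 1) (x : Fin n) :
    ED ℓ (nv ℓ p0 q0 x) = 0 := by
  unfold nv
  rw [ED_add, ED_indV, ED_indV, eps_prt hp0 hq0]
  ring

lemma nSq_sqv (v : Fin n → ℝ) (hv : ∀ j, 0 ≤ v j) : nSq n ℓ (sqv v) = ED ℓ v := by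
  unfold nSq sqv ED
  refine Finset.sum_congr rfl fun j _ => ?_
  rw [Complex.conj_ofReal]
  rw [mul_assoc, ← Complex.ofReal_mul, Real.mul_self_sqrt (hv j)]

lemma mono_sqv (v : Fin n → ℝ) (t : Tup n) :
    mono (sqv v) t = ((Real.sqrt (v t.1) * Real.sqrt (v t.2.1) * Real.sqrt (v t.2.2.1)
      * Real.sqrt (v t.2.2.2) : ℝ) : ℂ) := by
  unfold mono sqv
  rw [Complex.conj_ofReal, Complex.conj_ofReal]
  push_cast
  ring

end Vectors

/-! ### Tuple characterizations -/

section Chars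

lemma wgt_pos_mem {t : Tup n} {a : Fin n} (h : 1 ≤ wgt t a) : t.1 = a ∨ t.2.2.1 = a := by
  unfold wgt at h
  split_ifs at h <;> first | (left; assumption) | (right; assumption) | omega

lemma wgt_neg_mem {t : Tup n} {a : Fin n} (h : wgt t a ≤ -1) : t.2.1 = a ∨ t.2.2.2 = a := by
  unfold wgt at h
  split_ifs at h <;> first | (left; assumption) | (right; assumption) | omega

lemma wgt_two {t : Tup n} {a : Fin n} (h : wgt t a = 2) :
    t.1 = a ∧ t.2.2.1 = a ∧ ¬(t.2.1 = a) ∧ ¬(t.2.2.2 = a) := by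
  unfold wgt at h
  split_ifs at h <;>
    first
      | (exact ⟨by assumption, by assumption, by assumption, by assumption⟩)
      | omega

lemma wgt_neg_two {t : Tup n} {a : Fin n} (h : wgt t a = -2) :
    t.2.1 = a ∧ t.2.2.2 = a ∧ ¬(t.1 = a) ∧ ¬(t.2.2.1 = a) := by
  unfold wgt at h
  split_ifs at h <;>
    first
      | (exact ⟨by assumption, by assumption, by assumption, by assumption⟩)
      | omega

lemma charC1 {a b c d : Fin n} (hac : a ≠ c) (hbd : b ≠ d) {t : Tup n}
    (h1 : wgt t a = 1) (h2 : wgt t b = -1) (h3 : wgt t c = 1) (h4 : wgt t d = -1) :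
    t = (a,b,c,d) ∨ t = (a,d,c,b) ∨ t = (c,b,a,d) ∨ t = (c,d,a,b) := by
  obtain ⟨α,β,γ,δ⟩ := t
  have ha := wgt_pos_mem (show 1 ≤ wgt (α,β,γ,δ) a by omega)
  have hc := wgt_pos_mem (show 1 ≤ wgt (α,β,γ,δ) c by omega)
  have hb := wgt_neg_mem (show wgt (α,β,γ,δ) b ≤ -1 by omega)
  have hd := wgt_neg_mem (show wgt (α,β,γ,δ) d ≤ -1 by omega)
  simp only at ha hc hb hd
  rcases ha with ha | ha <;> rcases hc with hc | hc <;>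
    rcases hb with hb | hb <;> rcases hd with hd | hd <;>
      subst_vars <;> simp_all <;> tauto

lemma charC2 {a b d : Fin n} (hbd : b ≠ d) {t : Tup n}
    (h1 : wgt t a = 2) (h2 : wgt t b = -1) (h4 : wgt t d = -1) :
    t = (a,b,a,d) ∨ t = (a,d,a,b) := by
  obtain ⟨α,β,γ,δ⟩ := t
  obtain ⟨e1, e2, _, _⟩ := wgt_two h1
  have hb := wgt_neg_mem (show wgt (α,β,γ,δ) b ≤ -1 by omega)
  have hd := wgt_neg_mem (show wgt (α,β,γ,δ) d ≤ -1 by omega)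
  simp only at e1 e2 hb hd
  rcases hb with hb | hb <;> rcases hd with hd | hd <;> subst_vars <;> simp_all <;> tauto

lemma charC4 {a b : Fin n} {t : Tup n}
    (h1 : wgt t a = 2) (h2 : wgt t b = -2) :
    t = (a,b,a,b) := by
  obtain ⟨α,β,γ,δ⟩ := t
  obtain ⟨e1, e2, _, _⟩ := wgt_two h1
  obtain ⟨e3, e4, _, _⟩ := wgt_neg_two h2
  simp only at e1 e2 e3 e4
  subst_vars
  rfl

end Chars

section Eval

variable (s : Fin n → Fin n → Fin n → Fin n → ℂ)

lemma QP_eq_of_subset (P : Tup n → Prop) (F : Finset (Tup n))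
    (hchar : ∀ t, P t → t ∈ F) (z : Fin n → ℂ) :
    QP s P z = ∑ t ∈ F,
      Set.indicator {t | P t} (fun t => s t.1 t.2.1 t.2.2.1 t.2.2.2 * mono z t) t := by
  unfold QP
  exact (Finset.sum_subset (Finset.subset_univ F)
    (fun t _ ht => Set.indicator_of_notMem (fun hm => ht (hchar t hm)) _)).symm

end Eval

section Results

variable (s : Fin n → Fin n → Fin n → Fin n → ℂ)

lemma QP_congr (P P' : Tup n → Prop) (h : ∀ t, P t ↔ P' t) (z : Fin n → ℂ) :
    QP s P z = QP s P' z := by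
  unfold QP
  rw [show ({t | P t} : Set (Tup n)) = {t | P' t} from Set.ext h]

variable {p0 q0 : Fin n}

lemma R1 (hp0 : eps n ℓ p0 = -1) (hq0 : eps n ℓ q0 = 1)
    (hsym1 : ∀ α β γ δ, s α β γ δ = s γ β α δ)
    (hsym2 : ∀ α β γ δ, s α β γ δ = s γ δ α β)
    (hnullQ : ∀ z : Fin n → ℂ, nSq n ℓ z = 0 → QP s (fun _ => True) z = 0)
    {a b c d : Fin n} (hab : a ≠ b) (had : a ≠ d) (hcb : c ≠ b) (hcd : c ≠ d)
    (hac : a ≠ c) (hbd : b ≠ d) :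
    s a b c d = 0 := by
  have hsd : ∀ α β γ δ, s α β γ δ = s α δ γ β := by
    intro α β γ δ; rw [hsym2, hsym1, hsym2]
  have V := ext_lemma (ℓ := ℓ) s
    (ext_lemma (ℓ := ℓ) s (ext_lemma (ℓ := ℓ) s (ext_lemma (ℓ := ℓ) s hnullQ a 1) b (-1)) c 1)
    d (-1)
  have V2 : ∀ z : Fin n → ℂ, nSq n ℓ z = 0 →
      QP s (fun t => wgt t a = 1 ∧ wgt t b = -1 ∧ wgt t c = 1 ∧ wgt t d = -1) z = 0 := by
    intro z hz
    rw [QP_congr s (fun t => wgt t a = 1 ∧ wgt t b = -1 ∧ wgt t c = 1 ∧ wgt t d = -1)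
      (fun t => (((True ∧ wgt t a = 1) ∧ wgt t b = -1) ∧ wgt t c = 1) ∧ wgt t d = -1)
      (fun t => by tauto)]
    exact V z hz
  set v : Fin n → ℝ := nv ℓ p0 q0 a + nv ℓ p0 q0 b + nv ℓ p0 q0 c + nv ℓ p0 q0 d with hvdef
  have hvnn : ∀ j, 0 ≤ v j := by
    intro j
    simp only [hvdef, Pi.add_apply]
    have h1 := nv_nonneg (ℓ := ℓ) (p0 := p0) (q0 := q0) a j
    have h2 := nv_nonneg (ℓ := ℓ) (p0 := p0) (q0 := q0) b j
    have h3 := nv_nonneg (ℓ := ℓ) (p0 := p0) (q0 := q0) c j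
    have h4 := nv_nonneg (ℓ := ℓ) (p0 := p0) (q0 := q0) d j
    linarith
  have hnullv : nSq n ℓ (sqv v) = 0 := by
    rw [nSq_sqv v hvnn, hvdef]
    rw [ED_add, ED_add, ED_add, ED_nv hp0 hq0, ED_nv hp0 hq0, ED_nv hp0 hq0, ED_nv hp0 hq0]
    ring
  have hchar : ∀ t : Tup n, (wgt t a = 1 ∧ wgt t b = -1 ∧ wgt t c = 1 ∧ wgt t d = -1) →
      t ∈ ({(a,b,c,d),(a,d,c,b),(c,b,a,d),(c,d,a,b)} : Finset (Tup n)) := by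
    intro t ht
    have := charC1 hac hbd ht.1 ht.2.1 ht.2.2.1 ht.2.2.2
    simp only [Finset.mem_insert, Finset.mem_singleton]
    tauto
  have hQ : ∑ t ∈ ({(a,b,c,d),(a,d,c,b),(c,b,a,d),(c,d,a,b)} : Finset (Tup n)),
      Set.indicator {t : Tup n | wgt t a = 1 ∧ wgt t b = -1 ∧ wgt t c = 1 ∧ wgt t d = -1}
        (fun t => s t.1 t.2.1 t.2.2.1 t.2.2.2 * mono (sqv v) t) t = 0 := by
    rw [← QP_eq_of_subset s _ _ hchar (sqv v)]
    exact V2 (sqv v) hnullv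
  rw [Finset.sum_insert (by simp [Prod.ext_iff, hac, hbd]),
    Finset.sum_insert (by simp [Prod.ext_iff, hac]),
    Finset.sum_insert (by simp [Prod.ext_iff, hbd]),
    Finset.sum_singleton] at hQ
  have hm1 : ((a,b,c,d) : Tup n) ∈ {t : Tup n | wgt t a = 1 ∧ wgt t b = -1 ∧ wgt t c = 1
      ∧ wgt t d = -1} := by
    refine ⟨?_, ?_, ?_, ?_⟩ <;>
      simp [wgt, hab, had, hcb, hcd, hac, hbd,
        Ne.symm hab, Ne.symm had, Ne.symm hcb, Ne.symm hcd, Ne.symm hac, Ne.symm hbd]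
  have hm2 : ((a,d,c,b) : Tup n) ∈ {t : Tup n | wgt t a = 1 ∧ wgt t b = -1 ∧ wgt t c = 1
      ∧ wgt t d = -1} := by
    refine ⟨?_, ?_, ?_, ?_⟩ <;>
      simp [wgt, hab, had, hcb, hcd, hac, hbd,
        Ne.symm hab, Ne.symm had, Ne.symm hcb, Ne.symm hcd, Ne.symm hac, Ne.symm hbd]
  have hm3 : ((c,b,a,d) : Tup n) ∈ {t : Tup n | wgt t a = 1 ∧ wgt t b = -1 ∧ wgt t c = 1
      ∧ wgt t d = -1} := by
    refine ⟨?_, ?_, ?_, ?_⟩ <;>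
      simp [wgt, hab, had, hcb, hcd, hac, hbd,
        Ne.symm hab, Ne.symm had, Ne.symm hcb, Ne.symm hcd, Ne.symm hac, Ne.symm hbd]
  have hm4 : ((c,d,a,b) : Tup n) ∈ {t : Tup n | wgt t a = 1 ∧ wgt t b = -1 ∧ wgt t c = 1
      ∧ wgt t d = -1} := by
    refine ⟨?_, ?_, ?_, ?_⟩ <;>
      simp [wgt, hab, had, hcb, hcd, hac, hbd,
        Ne.symm hab, Ne.symm had, Ne.symm hcb, Ne.symm hcd, Ne.symm hac, Ne.symm hbd]
  rw [Set.indicator_of_mem hm1, Set.indicator_of_mem hm2, Set.indicator_of_mem hm3,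
    Set.indicator_of_mem hm4] at hQ
  simp only [mono_sqv] at hQ
  rw [show s a d c b = s a b c d from hsd a d c b,
    show s c b a d = s a b c d from hsym1 c b a d,
    show s c d a b = s a b c d from hsym2 c d a b] at hQ
  have hM : ((Real.sqrt (v a) : ℂ) * Real.sqrt (v b) * Real.sqrt (v c) * Real.sqrt (v d))
      * (4 * s a b c d) = 0 := by
    push_cast at hQ
    push_cast
    linear_combination hQ
  have hbound : ∀ x : Fin n, x = a ∨ x = b ∨ x = c ∨ x = d → (1:ℝ) ≤ v x := by
    intro x hx
    simp only [hvdef, Pi.add_apply]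
    rcases hx with h | h | h | h <;> rw [h]
    · have k1 := nv_self (ℓ := ℓ) (p0 := p0) (q0 := q0) a
      have k2 := nv_nonneg (ℓ := ℓ) (p0 := p0) (q0 := q0) b a
      have k3 := nv_nonneg (ℓ := ℓ) (p0 := p0) (q0 := q0) c a
      have k4 := nv_nonneg (ℓ := ℓ) (p0 := p0) (q0 := q0) d a
      linarith
    · have k1 := nv_self (ℓ := ℓ) (p0 := p0) (q0 := q0) b
      have k2 := nv_nonneg (ℓ := ℓ) (p0 := p0) (q0 := q0) a b
      have k3 := nv_nonneg (ℓ := ℓ) (p0 := p0) (q0 := q0) c b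
      have k4 := nv_nonneg (ℓ := ℓ) (p0 := p0) (q0 := q0) d b
      linarith
    · have k1 := nv_self (ℓ := ℓ) (p0 := p0) (q0 := q0) c
      have k2 := nv_nonneg (ℓ := ℓ) (p0 := p0) (q0 := q0) a c
      have k3 := nv_nonneg (ℓ := ℓ) (p0 := p0) (q0 := q0) b c
      have k4 := nv_nonneg (ℓ := ℓ) (p0 := p0) (q0 := q0) d c
      linarith
    · have k1 := nv_self (ℓ := ℓ) (p0 := p0) (q0 := q0) d
      have k2 := nv_nonneg (ℓ := ℓ) (p0 := p0) (q0 := q0) a d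
      have k3 := nv_nonneg (ℓ := ℓ) (p0 := p0) (q0 := q0) b d
      have k4 := nv_nonneg (ℓ := ℓ) (p0 := p0) (q0 := q0) c d
      linarith
  have hs : ∀ x : Fin n, x = a ∨ x = b ∨ x = c ∨ x = d → ((Real.sqrt (v x) : ℂ)) ≠ 0 := by
    intro x hx
    rw [Complex.ofReal_ne_zero]
    have := hbound x hx
    have : 0 < Real.sqrt (v x) := Real.sqrt_pos.mpr (by linarith)
    linarith
  have hprod : ((Real.sqrt (v a) : ℂ) * Real.sqrt (v b) * Real.sqrt (v c) * Real.sqrt (v d)) ≠ 0 :=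
    mul_ne_zero (mul_ne_zero (mul_ne_zero (hs a (by tauto)) (hs b (by tauto)))
      (hs c (by tauto))) (hs d (by tauto))
  have h4s := (mul_eq_zero.mp hM).resolve_left hprod
  have : s a b c d = 0 := by
    rcases mul_eq_zero.mp h4s with h | h
    · norm_num at h
    · exact h
  exact this

lemma R2 (hp0 : eps n ℓ p0 = -1) (hq0 : eps n ℓ q0 = 1)
    (hsym1 : ∀ α β γ δ, s α β γ δ = s γ β α δ)
    (hsym2 : ∀ α β γ δ, s α β γ δ = s γ δ α β)
    (hnullQ : ∀ z : Fin n → ℂ, nSq n ℓ z = 0 → QP s (fun _ => True) z = 0)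
    {a b d : Fin n} (hab : a ≠ b) (had : a ≠ d) (hbd : b ≠ d) :
    s a b a d = 0 := by
  have hsd : ∀ α β γ δ, s α β γ δ = s α δ γ β := by
    intro α β γ δ; rw [hsym2, hsym1, hsym2]
  have V := ext_lemma (ℓ := ℓ) s
    (ext_lemma (ℓ := ℓ) s (ext_lemma (ℓ := ℓ) s hnullQ a 2) b (-1)) d (-1)
  have V2 : ∀ z : Fin n → ℂ, nSq n ℓ z = 0 →
      QP s (fun t => wgt t a = 2 ∧ wgt t b = -1 ∧ wgt t d = -1) z = 0 := by
    intro z hz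
    rw [QP_congr s (fun t => wgt t a = 2 ∧ wgt t b = -1 ∧ wgt t d = -1)
      (fun t => ((True ∧ wgt t a = 2) ∧ wgt t b = -1) ∧ wgt t d = -1)
      (fun t => by tauto)]
    exact V z hz
  set v : Fin n → ℝ := nv ℓ p0 q0 a + nv ℓ p0 q0 b + nv ℓ p0 q0 d with hvdef
  have hvnn : ∀ j, 0 ≤ v j := by
    intro j
    simp only [hvdef, Pi.add_apply]
    have h1 := nv_nonneg (ℓ := ℓ) (p0 := p0) (q0 := q0) a j
    have h2 := nv_nonneg (ℓ := ℓ) (p0 := p0) (q0 := q0) b j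
    have h4 := nv_nonneg (ℓ := ℓ) (p0 := p0) (q0 := q0) d j
    linarith
  have hnullv : nSq n ℓ (sqv v) = 0 := by
    rw [nSq_sqv v hvnn, hvdef]
    rw [ED_add, ED_add, ED_nv hp0 hq0, ED_nv hp0 hq0, ED_nv hp0 hq0]
    ring
  have hchar : ∀ t : Tup n, (wgt t a = 2 ∧ wgt t b = -1 ∧ wgt t d = -1) →
      t ∈ ({(a,b,a,d),(a,d,a,b)} : Finset (Tup n)) := by
    intro t ht
    have := charC2 hbd ht.1 ht.2.1 ht.2.2
    simp only [Finset.mem_insert, Finset.mem_singleton]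
    tauto
  have hQ : ∑ t ∈ ({(a,b,a,d),(a,d,a,b)} : Finset (Tup n)),
      Set.indicator {t : Tup n | wgt t a = 2 ∧ wgt t b = -1 ∧ wgt t d = -1}
        (fun t => s t.1 t.2.1 t.2.2.1 t.2.2.2 * mono (sqv v) t) t = 0 := by
    rw [← QP_eq_of_subset s _ _ hchar (sqv v)]
    exact V2 (sqv v) hnullv
  rw [Finset.sum_insert (by simp [Prod.ext_iff, hbd]), Finset.sum_singleton] at hQ
  have hm1 : ((a,b,a,d) : Tup n) ∈ {t : Tup n | wgt t a = 2 ∧ wgt t b = -1 ∧ wgt t d = -1} := by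
    refine ⟨?_, ?_, ?_⟩ <;>
      simp [wgt, hab, had, hbd, Ne.symm hab, Ne.symm had, Ne.symm hbd]
  have hm2 : ((a,d,a,b) : Tup n) ∈ {t : Tup n | wgt t a = 2 ∧ wgt t b = -1 ∧ wgt t d = -1} := by
    refine ⟨?_, ?_, ?_⟩ <;>
      simp [wgt, hab, had, hbd, Ne.symm hab, Ne.symm had, Ne.symm hbd]
  rw [Set.indicator_of_mem hm1, Set.indicator_of_mem hm2] at hQ
  simp only [mono_sqv] at hQ
  rw [show s a d a b = s a b a d from hsd a d a b] at hQ
  have hM : ((Real.sqrt (v a) : ℂ) * Real.sqrt (v a) * Real.sqrt (v b) * Real.sqrt (v d))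
      * (2 * s a b a d) = 0 := by
    push_cast at hQ
    push_cast
    linear_combination hQ
  have hbound : ∀ x : Fin n, x = a ∨ x = b ∨ x = d → (1:ℝ) ≤ v x := by
    intro x hx
    simp only [hvdef, Pi.add_apply]
    rcases hx with h | h | h <;> rw [h]
    · have k1 := nv_self (ℓ := ℓ) (p0 := p0) (q0 := q0) a
      have k2 := nv_nonneg (ℓ := ℓ) (p0 := p0) (q0 := q0) b a
      have k4 := nv_nonneg (ℓ := ℓ) (p0 := p0) (q0 := q0) d a
      linarith
    · have k1 := nv_self (ℓ := ℓ) (p0 := p0) (q0 := q0) b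
      have k2 := nv_nonneg (ℓ := ℓ) (p0 := p0) (q0 := q0) a b
      have k4 := nv_nonneg (ℓ := ℓ) (p0 := p0) (q0 := q0) d b
      linarith
    · have k1 := nv_self (ℓ := ℓ) (p0 := p0) (q0 := q0) d
      have k2 := nv_nonneg (ℓ := ℓ) (p0 := p0) (q0 := q0) a d
      have k4 := nv_nonneg (ℓ := ℓ) (p0 := p0) (q0 := q0) b d
      linarith
  have hs : ∀ x : Fin n, x = a ∨ x = b ∨ x = d → ((Real.sqrt (v x) : ℂ)) ≠ 0 := by
    intro x hx
    rw [Complex.ofReal_ne_zero]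
    have := hbound x hx
    have : 0 < Real.sqrt (v x) := Real.sqrt_pos.mpr (by linarith)
    linarith
  have hprod : ((Real.sqrt (v a) : ℂ) * Real.sqrt (v a) * Real.sqrt (v b) * Real.sqrt (v d)) ≠ 0 :=
    mul_ne_zero (mul_ne_zero (mul_ne_zero (hs a (by tauto)) (hs a (by tauto)))
      (hs b (by tauto))) (hs d (by tauto))
  have h2s := (mul_eq_zero.mp hM).resolve_left hprod
  rcases mul_eq_zero.mp h2s with h | h
  · norm_num at h
  · exact h

lemma R3 (hp0 : eps n ℓ p0 = -1) (hq0 : eps n ℓ q0 = 1)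
    (hsym1 : ∀ α β γ δ, s α β γ δ = s γ β α δ)
    (hsym2 : ∀ α β γ δ, s α β γ δ = s γ δ α β)
    (hreal : ∀ α β γ δ, conj (s α β γ δ) = s β α δ γ)
    (hnullQ : ∀ z : Fin n → ℂ, nSq n ℓ z = 0 → QP s (fun _ => True) z = 0)
    {a b c : Fin n} (hac : a ≠ c) (hba : b ≠ a) (hbc : b ≠ c) :
    s a b c b = 0 := by
  have hsymc : ∀ α β γ δ, conj (s α β γ δ) = s β α δ γ := hreal
  have hconjs : ∀ α β γ δ, s α β γ δ = 0 ↔ conj (s α β γ δ) = 0 := by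
    intro α β γ δ
    constructor
    · intro h; rw [h]; simp
    · intro h
      have := congrArg conj h
      rwa [Complex.conj_conj, map_zero] at this
  rw [hconjs, hreal]
  exact R2 s hp0 hq0 hsym1 hsym2 hnullQ hba hbc hac

lemma R4 (hp0 : eps n ℓ p0 = -1) (hq0 : eps n ℓ q0 = 1)
    (hsym1 : ∀ α β γ δ, s α β γ δ = s γ β α δ)
    (hsym2 : ∀ α β γ δ, s α β γ δ = s γ δ α β)
    (hnullQ : ∀ z : Fin n → ℂ, nSq n ℓ z = 0 → QP s (fun _ => True) z = 0)
    {a b : Fin n} (hab : a ≠ b) :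
    s a b a b = 0 := by
  have V := ext_lemma (ℓ := ℓ) s (ext_lemma (ℓ := ℓ) s hnullQ a 2) b (-2)
  have V2 : ∀ z : Fin n → ℂ, nSq n ℓ z = 0 →
      QP s (fun t => wgt t a = 2 ∧ wgt t b = -2) z = 0 := by
    intro z hz
    rw [QP_congr s (fun t => wgt t a = 2 ∧ wgt t b = -2)
      (fun t => (True ∧ wgt t a = 2) ∧ wgt t b = -2)
      (fun t => by tauto)]
    exact V z hz
  set v : Fin n → ℝ := nv ℓ p0 q0 a + nv ℓ p0 q0 b with hvdef
  have hvnn : ∀ j, 0 ≤ v j := by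
    intro j
    simp only [hvdef, Pi.add_apply]
    have h1 := nv_nonneg (ℓ := ℓ) (p0 := p0) (q0 := q0) a j
    have h2 := nv_nonneg (ℓ := ℓ) (p0 := p0) (q0 := q0) b j
    linarith
  have hnullv : nSq n ℓ (sqv v) = 0 := by
    rw [nSq_sqv v hvnn, hvdef]
    rw [ED_add, ED_nv hp0 hq0, ED_nv hp0 hq0]
    ring
  have hchar : ∀ t : Tup n, (wgt t a = 2 ∧ wgt t b = -2) →
      t ∈ ({(a,b,a,b)} : Finset (Tup n)) := by
    intro t ht
    have := charC4 ht.1 ht.2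
    simp only [Finset.mem_singleton]
    tauto
  have hQ : ∑ t ∈ ({(a,b,a,b)} : Finset (Tup n)),
      Set.indicator {t : Tup n | wgt t a = 2 ∧ wgt t b = -2}
        (fun t => s t.1 t.2.1 t.2.2.1 t.2.2.2 * mono (sqv v) t) t = 0 := by
    rw [← QP_eq_of_subset s _ _ hchar (sqv v)]
    exact V2 (sqv v) hnullv
  rw [Finset.sum_singleton] at hQ
  have hm1 : ((a,b,a,b) : Tup n) ∈ {t : Tup n | wgt t a = 2 ∧ wgt t b = -2} := by
    refine ⟨?_, ?_⟩ <;> simp [wgt, hab, Ne.symm hab]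
  rw [Set.indicator_of_mem hm1] at hQ
  simp only [mono_sqv] at hQ
  have hbound : ∀ x : Fin n, x = a ∨ x = b → (1:ℝ) ≤ v x := by
    intro x hx
    simp only [hvdef, Pi.add_apply]
    rcases hx with h | h <;> rw [h]
    · have k1 := nv_self (ℓ := ℓ) (p0 := p0) (q0 := q0) a
      have k2 := nv_nonneg (ℓ := ℓ) (p0 := p0) (q0 := q0) b a
      linarith
    · have k1 := nv_self (ℓ := ℓ) (p0 := p0) (q0 := q0) b
      have k2 := nv_nonneg (ℓ := ℓ) (p0 := p0) (q0 := q0) a b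
      linarith
  have hs : ∀ x : Fin n, x = a ∨ x = b → ((Real.sqrt (v x) : ℂ)) ≠ 0 := by
    intro x hx
    rw [Complex.ofReal_ne_zero]
    have := hbound x hx
    have : 0 < Real.sqrt (v x) := Real.sqrt_pos.mpr (by linarith)
    linarith
  have hM : ((Real.sqrt (v a) : ℂ) * Real.sqrt (v b) * Real.sqrt (v a) * Real.sqrt (v b))
      * s a b a b = 0 := by
    push_cast at hQ
    push_cast
    linear_combination hQ
  have hprod : ((Real.sqrt (v a) : ℂ) * Real.sqrt (v b) * Real.sqrt (v a) * Real.sqrt (v b)) ≠ 0 :=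
    mul_ne_zero (mul_ne_zero (mul_ne_zero (hs a (by tauto)) (hs b (by tauto)))
      (hs a (by tauto))) (hs b (by tauto))
  exact (mul_eq_zero.mp hM).resolve_left hprod

lemma wgt_sw24 (α β γ δ j : Fin n) : wgt ((α,δ,γ,β) : Tup n) j = wgt ((α,β,γ,δ) : Tup n) j := by
  unfold wgt; simp only; ring

lemma wgt_sw13 (α β γ δ j : Fin n) : wgt ((γ,β,α,δ) : Tup n) j = wgt ((α,β,γ,δ) : Tup n) j := by
  unfold wgt; simp only; ring

lemma char5core
    (hR1 : ∀ ⦃a' b' c' d' : Fin n⦄, a' ≠ b' → a' ≠ d' → c' ≠ b' → c' ≠ d' → a' ≠ c' → b' ≠ d' →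
      s a' b' c' d' = 0)
    {a b γ δ : Fin n} (hab : a ≠ b)
    (h1 : wgt ((a,b,γ,δ) : Tup n) a = 1) (h2 : wgt ((a,b,γ,δ) : Tup n) b = -1) :
    (∃ c, ((a,b,γ,δ) : Tup n) = (a,b,c,c)) ∨ s a b γ δ = 0 := by
  by_cases hγδ : γ = δ
  · exact Or.inl ⟨γ, by rw [hγδ]⟩
  · right
    have hga : γ ≠ a ∧ δ ≠ a := by
      by_cases k1 : γ = a <;> by_cases k2 : δ = a
      · exact absurd (k1.trans k2.symm) hγδ
      · exfalso; norm_num [wgt, k1, k2, Ne.symm hab] at h1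
      · exfalso; norm_num [wgt, k1, k2, Ne.symm hab] at h1
      · exact ⟨k1, k2⟩
    have hgb : γ ≠ b ∧ δ ≠ b := by
      by_cases k1 : γ = b <;> by_cases k2 : δ = b
      · exact absurd (k1.trans k2.symm) hγδ
      · exfalso; norm_num [wgt, k1, k2, hab] at h2
      · exfalso; norm_num [wgt, k1, k2, hab] at h2
      · exact ⟨k1, k2⟩
    exact hR1 hab (Ne.symm hga.2) hgb.1 hγδ (Ne.symm hga.1) (Ne.symm hgb.2)

lemma char5
    (hsym1 : ∀ α β γ δ, s α β γ δ = s γ β α δ)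
    (hsym2 : ∀ α β γ δ, s α β γ δ = s γ δ α β)
    (hR1 : ∀ ⦃a' b' c' d' : Fin n⦄, a' ≠ b' → a' ≠ d' → c' ≠ b' → c' ≠ d' → a' ≠ c' → b' ≠ d' →
      s a' b' c' d' = 0)
    {a b : Fin n} (hab : a ≠ b) {t : Tup n}
    (h1 : wgt t a = 1) (h2 : wgt t b = -1) :
    (∃ c, t = ((a,b,c,c) : Tup n) ∨ t = (a,c,c,b) ∨ t = (c,b,a,c) ∨ t = (c,c,a,b))
      ∨ s t.1 t.2.1 t.2.2.1 t.2.2.2 = 0 := by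
  have hsd : ∀ α β γ δ, s α β γ δ = s α δ γ β := by
    intro α β γ δ; rw [hsym2, hsym1, hsym2]
  obtain ⟨α,β,γ,δ⟩ := t
  have hpa := wgt_pos_mem (show 1 ≤ wgt ((α,β,γ,δ) : Tup n) a by omega)
  have hmb := wgt_neg_mem (show wgt ((α,β,γ,δ) : Tup n) b ≤ -1 by omega)
  simp only at hpa hmb
  rcases hpa with hα | hγ <;> rcases hmb with hβ | hδ
  · rw [hα, hβ] at h1 h2 ⊢
    rcases char5core s hR1 hab h1 h2 with ⟨c, hc⟩ | h0
    · exact Or.inl ⟨c, Or.inl hc⟩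
    · exact Or.inr h0
  · rw [hα, hδ] at h1 h2 ⊢
    have h1' : wgt ((a,b,γ,β) : Tup n) a = 1 := (wgt_sw24 a β γ b a).trans h1
    have h2' : wgt ((a,b,γ,β) : Tup n) b = -1 := (wgt_sw24 a β γ b b).trans h2
    rcases char5core s hR1 hab h1' h2' with ⟨c, hc⟩ | h0
    · have e1 : γ = c := congrArg (fun t : Tup n => t.2.2.1) hc
      have e2 : β = c := congrArg (fun t : Tup n => t.2.2.2) hc
      exact Or.inl ⟨c, Or.inr (Or.inl (by rw [e1, e2]))⟩
    · right
      simp only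
      rw [hsd a β γ b]
      exact h0
  · rw [hγ, hβ] at h1 h2 ⊢
    have h1' : wgt ((a,b,α,δ) : Tup n) a = 1 := (wgt_sw13 α b a δ a).trans h1
    have h2' : wgt ((a,b,α,δ) : Tup n) b = -1 := (wgt_sw13 α b a δ b).trans h2
    rcases char5core s hR1 hab h1' h2' with ⟨c, hc⟩ | h0
    · have e1 : α = c := congrArg (fun t : Tup n => t.2.2.1) hc
      have e2 : δ = c := congrArg (fun t : Tup n => t.2.2.2) hc
      exact Or.inl ⟨c, Or.inr (Or.inr (Or.inl (by rw [e1, e2])))⟩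
    · right
      simp only
      rw [hsym1 α b a δ]
      exact h0
  · rw [hγ, hδ] at h1 h2 ⊢
    have h1' : wgt ((a,b,α,β) : Tup n) a = 1 :=
      ((wgt_sw13 α b a β a).trans (wgt_sw24 α β a b a)).trans h1
    have h2' : wgt ((a,b,α,β) : Tup n) b = -1 :=
      ((wgt_sw13 α b a β b).trans (wgt_sw24 α β a b b)).trans h2
    rcases char5core s hR1 hab h1' h2' with ⟨c, hc⟩ | h0
    · have e1 : α = c := congrArg (fun t : Tup n => t.2.2.1) hc
      have e2 : β = c := congrArg (fun t : Tup n => t.2.2.2) hc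
      exact Or.inl ⟨c, Or.inr (Or.inr (Or.inr (by rw [e1, e2])))⟩
    · right
      simp only
      rw [hsym1 α β a b, hsd a β α b]
      exact h0

lemma QP_eq_of_subset' (P : Tup n → Prop) (F : Finset (Tup n))
    (hchar : ∀ t, P t → t ∈ F ∨ s t.1 t.2.1 t.2.2.1 t.2.2.2 = 0) (z : Fin n → ℂ) :
    QP s P z = ∑ t ∈ F,
      Set.indicator {t | P t} (fun t => s t.1 t.2.1 t.2.2.1 t.2.2.2 * mono z t) t := by
  unfold QP
  refine (Finset.sum_subset (Finset.subset_univ F) (fun t _ ht => ?_)).symm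
  by_cases hP : P t
  · rw [Set.indicator_of_mem (show t ∈ {t | P t} from hP)]
    rw [(hchar t hP).resolve_left ht, zero_mul]
  · exact Set.indicator_of_notMem hP _

lemma R5 (hp0 : eps n ℓ p0 = -1) (hq0 : eps n ℓ q0 = 1)
    (hsym1 : ∀ α β γ δ, s α β γ δ = s γ β α δ)
    (hsym2 : ∀ α β γ δ, s α β γ δ = s γ δ α β)
    (hTR : ∀ γ δ : Fin n, TR (ℓ := ℓ) s γ δ = 0)
    (hR1 : ∀ ⦃a' b' c' d' : Fin n⦄, a' ≠ b' → a' ≠ d' → c' ≠ b' → c' ≠ d' → a' ≠ c' → b' ≠ d' →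
      s a' b' c' d' = 0)
    (hnullQ : ∀ z : Fin n → ℂ, nSq n ℓ z = 0 → QP s (fun _ => True) z = 0)
    {a b : Fin n} (hab : a ≠ b) :
    ∀ c : Fin n, s a b c c = 0 := by
  have hsd : ∀ α β γ δ, s α β γ δ = s α δ γ β := by
    intro α β γ δ; rw [hsym2, hsym1, hsym2]
  have hba : b ≠ a := Ne.symm hab
  set A : Fin n → ℂ := fun c => (if c = a ∨ c = b then 2 else 4) * s a b c c with hA
  have hAdef : ∀ c, A c = (if c = a ∨ c = b then 2 else 4) * s a b c c := fun c => rfl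
  have V := ext_lemma (ℓ := ℓ) s (ext_lemma (ℓ := ℓ) s hnullQ a 1) b (-1)
  have V2 : ∀ z : Fin n → ℂ, nSq n ℓ z = 0 →
      QP s (fun t => wgt t a = 1 ∧ wgt t b = -1) z = 0 := by
    intro z hz
    rw [QP_congr s (fun t => wgt t a = 1 ∧ wgt t b = -1)
      (fun t => (True ∧ wgt t a = 1) ∧ wgt t b = -1) (fun t => by tauto)]
    exact V z hz
  set F : Finset (Tup n) := Finset.univ.biUnion (fun c : Fin n =>
    ({(a,b,c,c),(a,c,c,b),(c,b,a,c),(c,c,a,b)} : Finset (Tup n))) with hF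
  have hchar : ∀ t : Tup n, (wgt t a = 1 ∧ wgt t b = -1) →
      t ∈ F ∨ s t.1 t.2.1 t.2.2.1 t.2.2.2 = 0 := by
    intro t ht
    rcases char5 s hsym1 hsym2 hR1 hab ht.1 ht.2 with ⟨c, hc⟩ | h0
    · left
      rw [hF]
      simp only [Finset.mem_biUnion]
      refine ⟨c, Finset.mem_univ c, ?_⟩
      simp only [Finset.mem_insert, Finset.mem_singleton]
      tauto
    · exact Or.inr h0
  have hdisj : ∀ x ∈ (Finset.univ : Finset (Fin n)), ∀ y ∈ (Finset.univ : Finset (Fin n)),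
      x ≠ y → Disjoint
        ({(a,b,x,x),(a,x,x,b),(x,b,a,x),(x,x,a,b)} : Finset (Tup n))
        ({(a,b,y,y),(a,y,y,b),(y,b,a,y),(y,y,a,b)} : Finset (Tup n)) := by
    intro x _ y _ hxy
    rw [Finset.disjoint_left]
    intro t htx hty
    simp only [Finset.mem_insert, Finset.mem_singleton] at htx hty
    rcases htx with h|h|h|h <;> subst h <;>
      simp only [Prod.mk.injEq] at hty <;> simp_all
  have EVAL : ∀ v : Fin n → ℝ, (∀ j, 0 ≤ v j) → ED ℓ v = 0 →
      ((Real.sqrt (v a) : ℂ) * Real.sqrt (v b)) * (∑ c : Fin n, A c * ((v c : ℝ) : ℂ)) = 0 := by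
    intro v hvnn hED
    have hnullv : nSq n ℓ (sqv v) = 0 := by rw [nSq_sqv v hvnn]; exact hED
    have hQ := V2 (sqv v) hnullv
    rw [QP_eq_of_subset' s _ F hchar (sqv v), hF, Finset.sum_biUnion hdisj] at hQ
    have hsq : ∀ x : Fin n, (Real.sqrt (v x) : ℂ) * Real.sqrt (v x) = ((v x : ℝ) : ℂ) := by
      intro x
      rw [← Complex.ofReal_mul, Real.mul_self_sqrt (hvnn x)]
    have hper : ∀ c : Fin n,
        ∑ t ∈ ({(a,b,c,c),(a,c,c,b),(c,b,a,c),(c,c,a,b)} : Finset (Tup n)),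
          Set.indicator {t : Tup n | wgt t a = 1 ∧ wgt t b = -1}
            (fun t => s t.1 t.2.1 t.2.2.1 t.2.2.2 * mono (sqv v) t) t
        = ((Real.sqrt (v a) : ℂ) * Real.sqrt (v b)) * (A c * ((v c : ℝ) : ℂ)) := by
      intro c
      by_cases hca : c = a
      · rw [hca]
        rw [show ({(a,b,a,a),(a,a,a,b),(a,b,a,a),(a,a,a,b)} : Finset (Tup n))
            = {(a,b,a,a),(a,a,a,b)} from by ext t; simp only [Finset.mem_insert, Finset.mem_singleton]; tauto]
        rw [Finset.sum_insert (by simp [Prod.ext_iff, hab, hba]), Finset.sum_singleton]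
        rw [Set.indicator_of_mem (by refine ⟨?_, ?_⟩ <;> norm_num [wgt, hab, hba])]
        rw [Set.indicator_of_mem (by refine ⟨?_, ?_⟩ <;> norm_num [wgt, hab, hba])]
        simp only [mono_sqv]
        rw [show s a a a b = s a b a a from hsd a a a b]
        rw [hAdef a, if_pos (Or.inl rfl)]
        push_cast
        linear_combination (2 * s a b a a * (Real.sqrt (v b) : ℂ) * (Real.sqrt (v a) : ℂ)) * hsq a
      · by_cases hcb : c = b
        · rw [hcb]
          rw [show ({(a,b,b,b),(a,b,b,b),(b,b,a,b),(b,b,a,b)} : Finset (Tup n))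
              = {(a,b,b,b),(b,b,a,b)} from by ext t; simp only [Finset.mem_insert, Finset.mem_singleton]; tauto]
          rw [Finset.sum_insert (by simp [Prod.ext_iff, hab, hba]), Finset.sum_singleton]
          rw [Set.indicator_of_mem (by refine ⟨?_, ?_⟩ <;> norm_num [wgt, hab, hba])]
          rw [Set.indicator_of_mem (by refine ⟨?_, ?_⟩ <;> norm_num [wgt, hab, hba])]
          simp only [mono_sqv]
          rw [show s b b a b = s a b b b from hsym1 b b a b]
          rw [hAdef b, if_pos (Or.inr rfl)]
          push_cast
          linear_combination (2 * s a b b b * (Real.sqrt (v b) : ℂ)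
            * (Real.sqrt (v a) : ℂ)) * hsq b
        · have hca' : a ≠ c := Ne.symm hca
          have hcb' : b ≠ c := Ne.symm hcb
          rw [Finset.sum_insert (by simp [Prod.ext_iff, hca, hcb, hca', hcb', hab, hba]),
            Finset.sum_insert (by simp [Prod.ext_iff, hca, hcb, hca', hcb', hab, hba]),
            Finset.sum_insert (by simp [Prod.ext_iff, hca, hcb, hca', hcb', hab, hba]),
            Finset.sum_singleton]
          rw [Set.indicator_of_mem (by
            refine ⟨?_, ?_⟩ <;> norm_num [wgt, hab, hba, hca, hcb, hca', hcb'])]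
          rw [Set.indicator_of_mem (by
            refine ⟨?_, ?_⟩ <;> norm_num [wgt, hab, hba, hca, hcb, hca', hcb'])]
          rw [Set.indicator_of_mem (by
            refine ⟨?_, ?_⟩ <;> norm_num [wgt, hab, hba, hca, hcb, hca', hcb'])]
          rw [Set.indicator_of_mem (by
            refine ⟨?_, ?_⟩ <;> norm_num [wgt, hab, hba, hca, hcb, hca', hcb'])]
          simp only [mono_sqv]
          rw [show s a c c b = s a b c c from hsd a c c b,
            show s c b a c = s a b c c from hsym1 c b a c,
            show s c c a b = s a b c c from hsym2 c c a b]
          rw [hAdef c, if_neg (by tauto)]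
          push_cast
          linear_combination (4 * s a b c c * (Real.sqrt (v b) : ℂ)
            * (Real.sqrt (v a) : ℂ)) * hsq c
    rw [Finset.sum_congr rfl (fun c _ => hper c), ← Finset.mul_sum] at hQ
    exact hQ
  have hL : ∀ v : Fin n → ℝ, (∀ j, 0 ≤ v j) → ED ℓ v = 0 → (1 ≤ v a) → (1 ≤ v b) →
      ∑ c : Fin n, A c * ((v c : ℝ) : ℂ) = 0 := by
    intro v hv hED ha hb
    have h := EVAL v hv hED
    have hne : ((Real.sqrt (v a) : ℂ) * Real.sqrt (v b)) ≠ 0 := by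
      apply mul_ne_zero <;> rw [Complex.ofReal_ne_zero]
      · have : 0 < Real.sqrt (v a) := Real.sqrt_pos.mpr (by linarith)
        linarith
      · have : 0 < Real.sqrt (v b) := Real.sqrt_pos.mpr (by linarith)
        linarith
    exact (mul_eq_zero.mp h).resolve_left hne
  have hRel : ∀ x : Fin n, A x + A (prt ℓ p0 q0 x) = 0 := by
    intro x
    have hb1 : (1:ℝ) ≤ (nv ℓ p0 q0 a + nv ℓ p0 q0 b) a := by
      have k1 := nv_self (ℓ := ℓ) (p0 := p0) (q0 := q0) a
      have k2 := nv_nonneg (ℓ := ℓ) (p0 := p0) (q0 := q0) b a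
      simp only [Pi.add_apply]; linarith
    have hb2 : (1:ℝ) ≤ (nv ℓ p0 q0 a + nv ℓ p0 q0 b) b := by
      have k1 := nv_self (ℓ := ℓ) (p0 := p0) (q0 := q0) b
      have k2 := nv_nonneg (ℓ := ℓ) (p0 := p0) (q0 := q0) a b
      simp only [Pi.add_apply]; linarith
    have h0 := hL (nv ℓ p0 q0 a + nv ℓ p0 q0 b)
      (fun j => add_nonneg (nv_nonneg _ _) (nv_nonneg _ _))
      (by rw [ED_add, ED_nv hp0 hq0, ED_nv hp0 hq0]; ring) hb1 hb2
    have h1 := hL (nv ℓ p0 q0 a + nv ℓ p0 q0 b + nv ℓ p0 q0 x)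
      (fun j => add_nonneg (add_nonneg (nv_nonneg _ _) (nv_nonneg _ _)) (nv_nonneg _ _))
      (by rw [ED_add, ED_add, ED_nv hp0 hq0, ED_nv hp0 hq0, ED_nv hp0 hq0]; ring)
      (by
        have k3 := nv_nonneg (ℓ := ℓ) (p0 := p0) (q0 := q0) x a
        simp only [Pi.add_apply] at hb1 ⊢; linarith)
      (by
        have k3 := nv_nonneg (ℓ := ℓ) (p0 := p0) (q0 := q0) x b
        simp only [Pi.add_apply] at hb2 ⊢; linarith)
    have hsplit : ∑ c : Fin n, A c * (((nv ℓ p0 q0 a + nv ℓ p0 q0 b + nv ℓ p0 q0 x) c : ℝ) : ℂ)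
        = ∑ c : Fin n, A c * (((nv ℓ p0 q0 a + nv ℓ p0 q0 b) c : ℝ) : ℂ)
          + ∑ c : Fin n, A c * ((nv ℓ p0 q0 x c : ℝ) : ℂ) := by
      rw [← Finset.sum_add_distrib]
      refine Finset.sum_congr rfl fun c _ => ?_
      simp only [Pi.add_apply]
      push_cast
      ring
    have hnvx : ∑ c : Fin n, A c * ((nv ℓ p0 q0 x c : ℝ) : ℂ)
        = A x + A (prt ℓ p0 q0 x) := by
      unfold nv indV
      have : ∀ c : Fin n, A c * ((((if c = x then (1:ℝ) else 0)
          + (if c = prt ℓ p0 q0 x then (1:ℝ) else 0)) : ℝ) : ℂ)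
          = (if c = x then A c else 0) + (if c = prt ℓ p0 q0 x then A c else 0) := by
        intro c
        by_cases k1 : c = x <;> by_cases k2 : c = prt ℓ p0 q0 x
        · simp only [if_pos k1, if_pos k2]; push_cast; ring
        · simp only [if_pos k1, if_neg k2]; push_cast; ring
        · simp only [if_neg k1, if_pos k2]; push_cast; ring
        · simp only [if_neg k1, if_neg k2]; push_cast; ring
      simp only [Pi.add_apply]
      rw [Finset.sum_congr rfl fun c _ => this c, Finset.sum_add_distrib,
        Finset.sum_ite_eq' Finset.univ x (fun c => A c),
        Finset.sum_ite_eq' Finset.univ (prt ℓ p0 q0 x) (fun c => A c)]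
      simp
    rw [hsplit, h0, hnvx, zero_add] at h1
    exact h1
  have hq0' : ¬((q0:ℕ) < ℓ) := by
    intro h
    unfold eps at hq0
    rw [if_pos h] at hq0
    norm_num at hq0
  have hArel : ∀ x : Fin n, A x = eps n ℓ x * A q0 := by
    intro x
    have hx := hRel x
    by_cases h : (x:ℕ) < ℓ
    · unfold prt at hx; rw [if_pos h] at hx
      unfold eps; rw [if_pos h]
      linear_combination hx
    · have hq := hRel q0
      unfold prt at hx hq
      rw [if_neg h] at hx
      rw [if_neg hq0'] at hq
      unfold eps; rw [if_neg h]
      linear_combination hx - hq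
  have htr : ∑ j : Fin n, eps n ℓ j * s a b j j = 0 := by
    have h := hTR a b
    unfold TR at h
    rw [← h]
    exact Finset.sum_congr rfl fun j _ => by rw [hsym2 a b j j]
  have hsum1 : ∑ j : Fin n, eps n ℓ j * A j = (n : ℂ) * A q0 := by
    calc ∑ j : Fin n, eps n ℓ j * A j = ∑ _j : Fin n, A q0 := by
          refine Finset.sum_congr rfl fun j _ => ?_
          rw [hArel j, ← mul_assoc, eps_mul_self, one_mul]
      _ = (n : ℂ) * A q0 := by
          rw [Finset.sum_const, Finset.card_univ, Fintype.card_fin, nsmul_eq_mul]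
  have hsum2 : ∑ j : Fin n, eps n ℓ j * A j = -2 * A q0 := by
    have hdiff : ∑ j : Fin n, (eps n ℓ j * A j - 4 * (eps n ℓ j * s a b j j))
        = -2 * A q0 := by
      rw [← Finset.sum_subset (Finset.subset_univ ({a, b} : Finset (Fin n)))
        (fun j _ hj => ?_)]
      · rw [Finset.sum_insert (by simp [hab]), Finset.sum_singleton]
        have ha' := hArel a
        have hb' := hArel b
        rw [hAdef a, if_pos (Or.inl rfl)] at ha'
        rw [hAdef b, if_pos (Or.inr rfl)] at hb'
        rw [hAdef a, if_pos (Or.inl rfl), hAdef b, if_pos (Or.inr rfl)]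
        have ea := eps_mul_self (n := n) (ℓ := ℓ) a
        have eb := eps_mul_self (n := n) (ℓ := ℓ) b
        linear_combination (-(eps n ℓ a)) * ha' - eps n ℓ b * hb'
          - (A q0) * ea - (A q0) * eb
      · have hj' : ¬(j = a ∨ j = b) := by
          simp only [Finset.mem_insert, Finset.mem_singleton] at hj
          tauto
        rw [hAdef j, if_neg hj']
        ring
    rw [Finset.sum_sub_distrib, ← Finset.mul_sum, htr, mul_zero, sub_zero] at hdiff
    exact hdiff
  have hκ : A q0 = 0 := by
    have h := hsum1.symm.trans hsum2
    have h2 : ((n : ℂ) + 2) * A q0 = 0 := by linear_combination h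
    have hn2 : ((n : ℂ) + 2) ≠ 0 := by
      have : ((n : ℂ) + 2) = ((n + 2 : ℕ) : ℂ) := by push_cast; ring
      rw [this]
      exact Nat.cast_ne_zero.mpr (by omega)
    exact (mul_eq_zero.mp h2).resolve_left hn2
  intro c
  have h := hArel c
  rw [hκ, mul_zero, hAdef c] at h
  rcases mul_eq_zero.mp h with h' | h'
  · exfalso; revert h'; split <;> norm_num
  · exact h'

lemma ZOFF
    (hsym1 : ∀ α β γ δ, s α β γ δ = s γ β α δ)
    (hsym2 : ∀ α β γ δ, s α β γ δ = s γ δ α β)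
    (hR1 : ∀ ⦃a' b' c' d' : Fin n⦄, a' ≠ b' → a' ≠ d' → c' ≠ b' → c' ≠ d' → a' ≠ c' → b' ≠ d' →
      s a' b' c' d' = 0)
    (hR2 : ∀ ⦃a b d : Fin n⦄, a ≠ b → a ≠ d → b ≠ d → s a b a d = 0)
    (hR3 : ∀ ⦃a b c : Fin n⦄, a ≠ c → b ≠ a → b ≠ c → s a b c b = 0)
    (hR4 : ∀ ⦃a b : Fin n⦄, a ≠ b → s a b a b = 0)
    (hR5 : ∀ ⦃a b : Fin n⦄, a ≠ b → ∀ c, s a b c c = 0) :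
    ∀ α β γ δ : Fin n, ¬((β = α ∧ δ = γ) ∨ (β = γ ∧ δ = α)) → s α β γ δ = 0 := by
  have hsd : ∀ α β γ δ, s α β γ δ = s α δ γ β := by
    intro α β γ δ; rw [hsym2, hsym1, hsym2]
  intro α β γ δ hne
  have hA : ¬(β = α ∧ δ = γ) := fun h => hne (Or.inl h)
  have hB : ¬(β = γ ∧ δ = α) := fun h => hne (Or.inr h)
  by_cases h1 : α = γ
  · by_cases h2 : β = α
    · have hδ : δ ≠ γ := fun h => hA ⟨h2, h⟩
      have hδα : δ ≠ α := fun h => hδ (h.trans h1)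
      rw [h2, ← h1, hsd α α α δ]
      exact hR5 (Ne.symm hδα) α
    · by_cases h3 : δ = α
      · rw [h3, ← h1]
        exact hR5 (Ne.symm h2) α
      · by_cases h4 : β = δ
        · rw [← h1, ← h4]
          exact hR4 (Ne.symm h2)
        · rw [← h1]
          exact hR2 (Ne.symm h2) (Ne.symm h3) h4
  · by_cases h2 : β = α
    · have hδγ : δ ≠ γ := fun h => hA ⟨h2, h⟩
      rw [h2, hsym2 α α γ δ]
      exact hR5 (Ne.symm hδγ) α
    · by_cases h3 : β = γ
      · have hδα : δ ≠ α := fun h => hB ⟨h3, h⟩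
        rw [h3, hsym1 α γ γ δ, hsym2 γ γ α δ]
        exact hR5 (Ne.symm hδα) γ
      · by_cases h4 : δ = α
        · rw [h4, hsd α β γ α, hsym2 α α γ β]
          exact hR5 (Ne.symm h3) α
        · by_cases h5 : δ = γ
          · rw [h5]
            exact hR5 (Ne.symm h2) γ
          · by_cases h6 : β = δ
            · rw [← h6]
              exact hR3 h1 h2 h3
            · exact hR1 (Ne.symm h2) (Ne.symm h4) (Ne.symm h3) (Ne.symm h5) h1 h6

def cM (a c : Fin n) : ℂ := if a = c then s a a a a else 2 * s a a c c

lemma QP_top_expand (z : Fin n → ℂ) :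
    QP s (fun _ => True) z
      = ∑ α : Fin n, ∑ β : Fin n, ∑ γ : Fin n, ∑ δ : Fin n,
          s α β γ δ * mono z (α,β,γ,δ) := by
  unfold QP
  rw [Fintype.sum_prod_type]
  refine Finset.sum_congr rfl fun α _ => ?_
  rw [Fintype.sum_prod_type]
  refine Finset.sum_congr rfl fun β _ => ?_
  rw [Fintype.sum_prod_type]
  refine Finset.sum_congr rfl fun γ _ => ?_
  refine Finset.sum_congr rfl fun δ _ => ?_
  rw [Set.indicator_of_mem (by trivial)]

lemma Q_eq_diag
    (hsym1 : ∀ α β γ δ, s α β γ δ = s γ β α δ)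
    (hsym2 : ∀ α β γ δ, s α β γ δ = s γ δ α β)
    (hZ : ∀ α β γ δ : Fin n, ¬((β = α ∧ δ = γ) ∨ (β = γ ∧ δ = α)) → s α β γ δ = 0)
    (z : Fin n → ℂ) :
    QP s (fun _ => True) z
      = ∑ α : Fin n, ∑ γ : Fin n, cM s α γ * (z α * conj (z α) * (z γ * conj (z γ))) := by
  have hsd : ∀ α β γ δ, s α β γ δ = s α δ γ β := by
    intro α β γ δ; rw [hsym2, hsym1, hsym2]
  rw [QP_top_expand]
  rw [Finset.sum_congr rfl fun α (_ : α ∈ Finset.univ) => Finset.sum_comm]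
  refine Finset.sum_congr rfl fun α _ => ?_
  refine Finset.sum_congr rfl fun γ _ => ?_
  have hterm : ∀ β δ : Fin n, s α β γ δ * mono z (α,β,γ,δ)
      = if (β = α ∧ δ = γ) ∨ (β = γ ∧ δ = α) then s α β γ δ * mono z (α,β,γ,δ) else 0 := by
    intro β δ
    by_cases h : (β = α ∧ δ = γ) ∨ (β = γ ∧ δ = α)
    · rw [if_pos h]
    · rw [if_neg h, hZ α β γ δ h, zero_mul]
  rw [Finset.sum_congr rfl fun β _ => Finset.sum_congr rfl fun δ _ => hterm β δ]
  by_cases hαγ : α = γ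
  · rw [← hαγ]
    have hc : ∀ β δ : Fin n,
        (if (β = α ∧ δ = α) ∨ (β = α ∧ δ = α) then s α β α δ * mono z (α,β,α,δ) else 0)
        = if β = α then (if δ = α then s α β α δ * mono z (α,β,α,δ) else 0) else 0 := by
      intro β δ
      by_cases k1 : β = α <;> by_cases k2 : δ = α <;> simp [k1, k2]
    rw [Finset.sum_congr rfl fun β _ => Finset.sum_congr rfl fun δ _ => hc β δ]
    rw [Finset.sum_congr rfl fun β _ => sum_ite_push (P := β = α) _]
    rw [Finset.sum_ite_eq' Finset.univ α]
    rw [if_pos (Finset.mem_univ α)]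
    rw [Finset.sum_ite_eq' Finset.univ α]
    rw [if_pos (Finset.mem_univ α)]
    unfold cM mono
    rw [if_pos rfl]
    simp only
    ring
  · have hc : ∀ β δ : Fin n,
        (if (β = α ∧ δ = γ) ∨ (β = γ ∧ δ = α) then s α β γ δ * mono z (α,β,γ,δ) else 0)
        = (if β = α then (if δ = γ then s α β γ δ * mono z (α,β,γ,δ) else 0) else 0)
          + (if β = γ then (if δ = α then s α β γ δ * mono z (α,β,γ,δ) else 0) else 0) := by
      intro β δ
      by_cases k1 : β = α <;> by_cases k2 : δ = γ <;> by_cases k3 : β = γ <;>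
        by_cases k4 : δ = α <;>
        first
          | (exact absurd (k1.symm.trans k3) hαγ)
          | (exact absurd (k4.symm.trans k2) hαγ)
          | (simp [k1, k2, k3, k4] <;> (intro h; first | exact absurd h hαγ | exact absurd h.symm hαγ))
    rw [Finset.sum_congr rfl fun β _ => Finset.sum_congr rfl fun δ _ => hc β δ]
    rw [Finset.sum_congr rfl fun β _ => Finset.sum_add_distrib, Finset.sum_add_distrib]
    rw [Finset.sum_congr rfl fun β _ => sum_ite_push (P := β = α) _,
      Finset.sum_ite_eq' Finset.univ α, if_pos (Finset.mem_univ α),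
      Finset.sum_ite_eq' Finset.univ γ, if_pos (Finset.mem_univ γ)]
    conv_lhs =>
      rw [Finset.sum_congr rfl fun β _ => sum_ite_push (P := β = γ) _,
        Finset.sum_ite_eq' Finset.univ γ, if_pos (Finset.mem_univ γ),
        Finset.sum_ite_eq' Finset.univ α, if_pos (Finset.mem_univ α)]
    rw [show s α γ γ α = s α α γ γ from hsd α γ γ α]
    unfold cM mono
    rw [if_neg hαγ]
    simp only
    ring

lemma cM_symm (hsym2 : ∀ α β γ δ, s α β γ δ = s γ δ α β) (a c : Fin n) :
    cM s a c = cM s c a := by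
  unfold cM
  by_cases h : a = c
  · rw [if_pos h, if_pos h.symm, h]
  · rw [if_neg h, if_neg (Ne.symm h), hsym2 a a c c]

lemma dsum_eval (M : Fin n → Fin n → ℂ) (x1 x2 y1 y2 : Fin n) :
    (∑ α : Fin n, ∑ γ : Fin n, M α γ
      * ((((if α = x1 then (1:ℝ) else 0) + (if α = x2 then (1:ℝ) else 0) : ℝ)) : ℂ)
      * ((((if γ = y1 then (1:ℝ) else 0) + (if γ = y2 then (1:ℝ) else 0) : ℝ)) : ℂ))
    = M x1 y1 + M x1 y2 + (M x2 y1 + M x2 y2) := by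
  have hexp : ∀ α γ : Fin n, M α γ
      * ((((if α = x1 then (1:ℝ) else 0) + (if α = x2 then (1:ℝ) else 0) : ℝ)) : ℂ)
      * ((((if γ = y1 then (1:ℝ) else 0) + (if γ = y2 then (1:ℝ) else 0) : ℝ)) : ℂ)
      = (if α = x1 then (if γ = y1 then M α γ else 0) + (if γ = y2 then M α γ else 0) else 0)
        + (if α = x2 then (if γ = y1 then M α γ else 0) + (if γ = y2 then M α γ else 0) else 0) := by
    intro α γ
    push_cast
    split_ifs <;> push_cast <;> ring
  rw [Finset.sum_congr rfl fun α _ => Finset.sum_congr rfl fun γ _ => hexp α γ]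
  rw [Finset.sum_congr rfl fun α _ => Finset.sum_add_distrib, Finset.sum_add_distrib]
  congr 1
  · rw [Finset.sum_congr rfl fun α _ => sum_ite_push (P := α = x1) _,
      Finset.sum_ite_eq' Finset.univ x1, if_pos (Finset.mem_univ x1),
      Finset.sum_add_distrib,
      Finset.sum_ite_eq' Finset.univ y1, if_pos (Finset.mem_univ y1),
      Finset.sum_ite_eq' Finset.univ y2, if_pos (Finset.mem_univ y2)]
  · rw [Finset.sum_congr rfl fun α _ => sum_ite_push (P := α = x2) _,
      Finset.sum_ite_eq' Finset.univ x2, if_pos (Finset.mem_univ x2),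
      Finset.sum_add_distrib,
      Finset.sum_ite_eq' Finset.univ y1, if_pos (Finset.mem_univ y1),
      Finset.sum_ite_eq' Finset.univ y2, if_pos (Finset.mem_univ y2)]

lemma R6 (hp0 : eps n ℓ p0 = -1) (hq0 : eps n ℓ q0 = 1)
    (hsym1 : ∀ α β γ δ, s α β γ δ = s γ β α δ)
    (hsym2 : ∀ α β γ δ, s α β γ δ = s γ δ α β)
    (hTR : ∀ γ δ : Fin n, TR (ℓ := ℓ) s γ δ = 0)
    (hZ : ∀ α β γ δ : Fin n, ¬((β = α ∧ δ = γ) ∨ (β = γ ∧ δ = α)) → s α β γ δ = 0)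
    (hnullQ : ∀ z : Fin n → ℂ, nSq n ℓ z = 0 → QP s (fun _ => True) z = 0) :
    ∀ a c : Fin n, cM s a c = 0 := by
  have hq0' : ¬((q0:ℕ) < ℓ) := by
    intro h
    unfold eps at hq0
    rw [if_pos h] at hq0
    norm_num at hq0
  have hBL : ∀ v : Fin n → ℝ, (∀ j, 0 ≤ v j) → ED ℓ v = 0 →
      (∑ α : Fin n, ∑ γ : Fin n, cM s α γ * ((v α : ℝ) : ℂ) * ((v γ : ℝ) : ℂ)) = 0 := by
    intro v hv hED
    have h := hnullQ (sqv v) (by rw [nSq_sqv v hv]; exact hED)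
    rw [Q_eq_diag s hsym1 hsym2 hZ (sqv v)] at h
    have hsq : ∀ x : Fin n, sqv v x * conj (sqv v x) = ((v x : ℝ) : ℂ) := by
      intro x
      unfold sqv
      rw [Complex.conj_ofReal, ← Complex.ofReal_mul, Real.mul_self_sqrt (hv x)]
    rw [← h]
    refine Finset.sum_congr rfl fun α _ => Finset.sum_congr rfl fun γ _ => ?_
    rw [hsq α, hsq γ]
    ring
  have REL6 : ∀ x y : Fin n,
      cM s x y + cM s x (prt ℓ p0 q0 y)
        + (cM s (prt ℓ p0 q0 x) y + cM s (prt ℓ p0 q0 x) (prt ℓ p0 q0 y)) = 0 := by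
    intro x y
    have hx := hBL (nv ℓ p0 q0 x) (fun j => nv_nonneg _ _) (ED_nv hp0 hq0 x)
    have hy := hBL (nv ℓ p0 q0 y) (fun j => nv_nonneg _ _) (ED_nv hp0 hq0 y)
    have hxy := hBL (nv ℓ p0 q0 x + nv ℓ p0 q0 y)
      (fun j => add_nonneg (nv_nonneg _ _) (nv_nonneg _ _))
      (by rw [ED_add, ED_nv hp0 hq0, ED_nv hp0 hq0]; ring)
    have hsplit :
        (∑ α : Fin n, ∑ γ : Fin n, cM s α γ
          * (((nv ℓ p0 q0 x + nv ℓ p0 q0 y) α : ℝ) : ℂ)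
          * (((nv ℓ p0 q0 x + nv ℓ p0 q0 y) γ : ℝ) : ℂ))
        = (∑ α : Fin n, ∑ γ : Fin n, cM s α γ
            * ((nv ℓ p0 q0 x α : ℝ) : ℂ) * ((nv ℓ p0 q0 x γ : ℝ) : ℂ))
          + (∑ α : Fin n, ∑ γ : Fin n, cM s α γ
            * ((nv ℓ p0 q0 x α : ℝ) : ℂ) * ((nv ℓ p0 q0 y γ : ℝ) : ℂ))
          + ((∑ α : Fin n, ∑ γ : Fin n, cM s α γ
            * ((nv ℓ p0 q0 y α : ℝ) : ℂ) * ((nv ℓ p0 q0 x γ : ℝ) : ℂ))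
          + (∑ α : Fin n, ∑ γ : Fin n, cM s α γ
            * ((nv ℓ p0 q0 y α : ℝ) : ℂ) * ((nv ℓ p0 q0 y γ : ℝ) : ℂ))) := by
      rw [Finset.sum_congr rfl fun α _ => Finset.sum_congr rfl fun γ _ =>
        (by simp only [Pi.add_apply]; push_cast; ring :
          cM s α γ * (((nv ℓ p0 q0 x + nv ℓ p0 q0 y) α : ℝ) : ℂ)
            * (((nv ℓ p0 q0 x + nv ℓ p0 q0 y) γ : ℝ) : ℂ)
          = cM s α γ * ((nv ℓ p0 q0 x α : ℝ) : ℂ) * ((nv ℓ p0 q0 x γ : ℝ) : ℂ)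
            + cM s α γ * ((nv ℓ p0 q0 x α : ℝ) : ℂ) * ((nv ℓ p0 q0 y γ : ℝ) : ℂ)
            + (cM s α γ * ((nv ℓ p0 q0 y α : ℝ) : ℂ) * ((nv ℓ p0 q0 x γ : ℝ) : ℂ)
            + cM s α γ * ((nv ℓ p0 q0 y α : ℝ) : ℂ) * ((nv ℓ p0 q0 y γ : ℝ) : ℂ)))]
      simp only [Finset.sum_add_distrib]
    rw [hsplit, hx, hy] at hxy
    have hvw : (∑ α : Fin n, ∑ γ : Fin n, cM s α γ
        * ((nv ℓ p0 q0 x α : ℝ) : ℂ) * ((nv ℓ p0 q0 y γ : ℝ) : ℂ))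
        = cM s x y + cM s x (prt ℓ p0 q0 y)
          + (cM s (prt ℓ p0 q0 x) y + cM s (prt ℓ p0 q0 x) (prt ℓ p0 q0 y)) := by
      unfold nv indV
      simp only [Pi.add_apply]
      exact dsum_eval (cM s) x (prt ℓ p0 q0 x) y (prt ℓ p0 q0 y)
    have hwv : (∑ α : Fin n, ∑ γ : Fin n, cM s α γ
        * ((nv ℓ p0 q0 y α : ℝ) : ℂ) * ((nv ℓ p0 q0 x γ : ℝ) : ℂ))
        = cM s y x + cM s y (prt ℓ p0 q0 x)
          + (cM s (prt ℓ p0 q0 y) x + cM s (prt ℓ p0 q0 y) (prt ℓ p0 q0 x)) := by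
      unfold nv indV
      simp only [Pi.add_apply]
      exact dsum_eval (cM s) y (prt ℓ p0 q0 y) x (prt ℓ p0 q0 x)
    rw [hvw, hwv] at hxy
    have e1 := cM_symm s hsym2 y x
    have e2 := cM_symm s hsym2 y (prt ℓ p0 q0 x)
    have e3 := cM_symm s hsym2 (prt ℓ p0 q0 y) x
    have e4 := cM_symm s hsym2 (prt ℓ p0 q0 y) (prt ℓ p0 q0 x)
    have h2 : (2:ℂ) * (cM s x y + cM s x (prt ℓ p0 q0 y)
        + (cM s (prt ℓ p0 q0 x) y + cM s (prt ℓ p0 q0 x) (prt ℓ p0 q0 y))) = 0 := by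
      linear_combination hxy - e1 - e2 - e3 - e4
    have := mul_eq_zero.mp h2
    rcases this with h' | h'
    · norm_num at h'
    · exact h'
  -- the λ vector
  set lam : Fin n → ℂ := fun c => cM s q0 c - eps n ℓ c * cM s q0 q0 / 2 with hlam
  have hlamdef : ∀ c, lam c = cM s q0 c - eps n ℓ c * cM s q0 q0 / 2 := fun c => rfl
  have MAIN6 : ∀ a c : Fin n, cM s a c = eps n ℓ a * lam c + eps n ℓ c * lam a := by
    intro a c
    have hrac := REL6 a c
    have hraq := REL6 a q0
    have hrqc := REL6 q0 c
    have hrqq := REL6 q0 q0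
    unfold prt at hrac hraq hrqc hrqq
    rw [if_neg hq0'] at hraq hrqc hrqq
    have sq1 := cM_symm s hsym2 a q0
    have sq2 := cM_symm s hsym2 a p0
    have sq3 := cM_symm s hsym2 p0 q0
    rw [hlamdef a, hlamdef c]
    by_cases ha : (a:ℕ) < ℓ <;> by_cases hc : (c:ℕ) < ℓ
    · rw [if_pos ha, if_pos hc] at hrac
      rw [if_pos ha] at hraq
      rw [if_pos hc] at hrqc
      unfold eps
      rw [if_pos ha, if_pos hc]
      linear_combination hrac - sq1
    · rw [if_pos ha, if_neg hc] at hrac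
      rw [if_pos ha] at hraq
      rw [if_neg hc] at hrqc
      unfold eps
      rw [if_pos ha, if_neg hc]
      linear_combination hrac - hraq + sq1
    · rw [if_neg ha, if_pos hc] at hrac
      rw [if_neg ha] at hraq
      rw [if_pos hc] at hrqc
      unfold eps
      rw [if_neg ha, if_pos hc]
      linear_combination hrac - hrqc - sq1
    · rw [if_neg ha, if_neg hc] at hrac
      rw [if_neg ha] at hraq
      rw [if_neg hc] at hrqc
      unfold eps
      rw [if_neg ha, if_neg hc]
      linear_combination hrac - hraq - hrqc + hrqq + sq1
  -- contraction with the trace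
  have hcontr : ∀ c : Fin n, ∑ a : Fin n, eps n ℓ a * cM s a c = - eps n ℓ c * cM s c c := by
    intro c
    have e1 : ∀ a : Fin n, eps n ℓ a * cM s a c
        = 2 * (eps n ℓ a * s a a c c) - (if a = c then eps n ℓ a * s c c c c else 0) := by
      intro a
      unfold cM
      by_cases h : a = c
      · rw [if_pos h, if_pos h, h]; ring
      · rw [if_neg h, if_neg h]; ring
    rw [Finset.sum_congr rfl fun a _ => e1 a, Finset.sum_sub_distrib]
    rw [Finset.sum_ite_eq' Finset.univ c, if_pos (Finset.mem_univ c)]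
    have htr := hTR c c
    unfold TR at htr
    rw [← Finset.mul_sum, htr, mul_zero, zero_sub]
    unfold cM
    rw [if_pos rfl]
    ring
  have hΛstep : ∀ c : Fin n, ((n:ℂ) + 2) * lam c
      = - eps n ℓ c * (∑ a : Fin n, eps n ℓ a * lam a) := by
    intro c
    have hS1 : ∑ a : Fin n, eps n ℓ a * cM s a c
        = (n:ℂ) * lam c + eps n ℓ c * (∑ a : Fin n, eps n ℓ a * lam a) := by
      calc ∑ a : Fin n, eps n ℓ a * cM s a c
          = ∑ a : Fin n, (lam c + eps n ℓ c * (eps n ℓ a * lam a)) := by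
            refine Finset.sum_congr rfl fun a _ => ?_
            rw [MAIN6 a c]
            have := eps_mul_self (n := n) (ℓ := ℓ) a
            linear_combination lam c * this
        _ = (n:ℂ) * lam c + eps n ℓ c * (∑ a : Fin n, eps n ℓ a * lam a) := by
            rw [Finset.sum_add_distrib, Finset.sum_const, Finset.card_univ, Fintype.card_fin,
              nsmul_eq_mul, ← Finset.mul_sum]
    have hS2 := hcontr c
    have hcc : cM s c c = 2 * (eps n ℓ c * lam c) := by
      rw [MAIN6 c c]; ring
    have ec := eps_mul_self (n := n) (ℓ := ℓ) c
    rw [hS1, hcc] at hS2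
    linear_combination hS2 + 2 * lam c * ec + (2 * eps n ℓ c * cM s q0 q0 - 4 * cM s q0 c) * ec
  have hΛ : (∑ a : Fin n, eps n ℓ a * lam a) = 0 := by
    have h1 : ∑ c : Fin n, eps n ℓ c * (((n:ℂ) + 2) * lam c)
        = ∑ c : Fin n, eps n ℓ c * (- eps n ℓ c * (∑ a : Fin n, eps n ℓ a * lam a)) :=
      Finset.sum_congr rfl fun c _ => by rw [hΛstep c]
    have h2 : ∑ c : Fin n, eps n ℓ c * (((n:ℂ) + 2) * lam c)
        = ((n:ℂ) + 2) * (∑ a : Fin n, eps n ℓ a * lam a) := by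
      rw [Finset.mul_sum]
      exact Finset.sum_congr rfl fun c _ => by ring
    have h3 : ∑ c : Fin n, eps n ℓ c * (- eps n ℓ c * (∑ a : Fin n, eps n ℓ a * lam a))
        = - (n:ℂ) * (∑ a : Fin n, eps n ℓ a * lam a) := by
      calc ∑ c : Fin n, eps n ℓ c * (- eps n ℓ c * (∑ a : Fin n, eps n ℓ a * lam a))
          = ∑ _c : Fin n, - (∑ a : Fin n, eps n ℓ a * lam a) := by
            refine Finset.sum_congr rfl fun c _ => ?_
            have := eps_mul_self (n := n) (ℓ := ℓ) c
            linear_combination (- (∑ a : Fin n, eps n ℓ a * lam a)) * this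
        _ = - (n:ℂ) * (∑ a : Fin n, eps n ℓ a * lam a) := by
            rw [Finset.sum_const, Finset.card_univ, Fintype.card_fin, nsmul_eq_mul]
            ring
    rw [h2, h3] at h1
    have h4 : ((2:ℂ) * n + 2) * (∑ a : Fin n, eps n ℓ a * lam a) = 0 := by
      linear_combination h1
    have hne : ((2:ℂ) * n + 2) ≠ 0 := by
      have : ((2:ℂ) * n + 2) = ((2 * n + 2 : ℕ) : ℂ) := by push_cast; ring
      rw [this]
      exact Nat.cast_ne_zero.mpr (by omega)
    exact (mul_eq_zero.mp h4).resolve_left hne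
  have hlam0 : ∀ c, lam c = 0 := by
    intro c
    have h := hΛstep c
    rw [hΛ, mul_zero] at h
    have hne : ((n:ℂ) + 2) ≠ 0 := by
      have : ((n:ℂ) + 2) = ((n + 2 : ℕ) : ℂ) := by push_cast; ring
      rw [this]
      exact Nat.cast_ne_zero.mpr (by omega)
    exact (mul_eq_zero.mp h).resolve_left hne
  intro a c
  rw [MAIN6 a c, hlam0 a, hlam0 c]
  ring

lemma s_all_zero
    (hsym1 : ∀ α β γ δ, s α β γ δ = s γ β α δ)
    (hsym2 : ∀ α β γ δ, s α β γ δ = s γ δ α β)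
    (hZ : ∀ α β γ δ : Fin n, ¬((β = α ∧ δ = γ) ∨ (β = γ ∧ δ = α)) → s α β γ δ = 0)
    (hR6 : ∀ a c : Fin n, cM s a c = 0) :
    ∀ α β γ δ : Fin n, s α β γ δ = 0 := by
  have hsd : ∀ α β γ δ, s α β γ δ = s α δ γ β := by
    intro α β γ δ; rw [hsym2, hsym1, hsym2]
  have hdiag : ∀ a c : Fin n, s a a c c = 0 := by
    intro a c
    have h := hR6 a c
    unfold cM at h
    by_cases hac : a = c
    · rw [if_pos hac] at h
      rw [← hac]
      exact h
    · rw [if_neg hac] at h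
      rcases mul_eq_zero.mp h with h' | h'
      · norm_num at h'
      · exact h'
  intro α β γ δ
  by_cases hp : (β = α ∧ δ = γ) ∨ (β = γ ∧ δ = α)
  · rcases hp with ⟨h1, h2⟩ | ⟨h1, h2⟩
    · rw [h1, h2]
      exact hdiag α γ
    · rw [h1, h2, hsd α γ γ α]
      exact hdiag α γ
  · exact hZ α β γ δ hp

end Results

end Stmt5

/-- a real bidegree (2,2) polynomial satisfying the Chern-Moser-Weyl
symmetry relations and `△_ℓ s ≡ 0` which vanishes on the null cone
`𝒞_ℓ = {|z|_ℓ² = 0}` vanishes identically, provided `0 < ℓ ≤ n/2`. -/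
theorem stmt5 {n ℓ : ℕ} (hl0 : 0 < ℓ) (hl : 2 * ℓ ≤ n)
    (s : Fin n → Fin n → Fin n → Fin n → ℂ)
    (hsym1 : ∀ α β γ δ, s α β γ δ = s γ β α δ)
    (hsym2 : ∀ α β γ δ, s α β γ δ = s γ δ α β)
    (hreal : ∀ α β γ δ, conj (s α β γ δ) = s β α δ γ)
    (hharm : ∀ z : Fin n → ℂ, lapL ℓ (quartic s) z (fun j => conj (z j)) = 0)
    (hnull : ∀ z : Fin n → ℂ, nSq n ℓ z = 0 → quartic s z (fun j => conj (z j)) = 0) :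
    ∀ z : Fin n → ℂ, quartic s z (fun j => conj (z j)) = 0 := by
  intro z
  have hn2 : 2 ≤ n := by omega
  have hp0 : eps n ℓ (⟨0, by omega⟩ : Fin n) = -1 := by
    unfold eps
    rw [if_pos (by simpa using hl0)]
  have hq0 : eps n ℓ (⟨n - 1, by omega⟩ : Fin n) = 1 := by
    unfold eps
    rw [if_neg (by simp; omega)]
  have hnullQ : ∀ z : Fin n → ℂ, nSq n ℓ z = 0 →
      Stmt5.QP s (fun _ => True) z = 0 := by
    intro z hz
    rw [Stmt5.QP_top]
    exact hnull z hz
  have hTR := Stmt5.TR_eq_zero (ℓ := ℓ) s hsym1 hsym2 hharm hn2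
  have hR1' : ∀ ⦃a b c d : Fin n⦄, a ≠ b → a ≠ d → c ≠ b → c ≠ d → a ≠ c → b ≠ d →
      s a b c d = 0 := fun a b c d h1 h2 h3 h4 h5 h6 =>
    Stmt5.R1 s hp0 hq0 hsym1 hsym2 hnullQ h1 h2 h3 h4 h5 h6
  have hR2' : ∀ ⦃a b d : Fin n⦄, a ≠ b → a ≠ d → b ≠ d → s a b a d = 0 :=
    fun a b d h1 h2 h3 => Stmt5.R2 s hp0 hq0 hsym1 hsym2 hnullQ h1 h2 h3
  have hR3' : ∀ ⦃a b c : Fin n⦄, a ≠ c → b ≠ a → b ≠ c → s a b c b = 0 :=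
    fun a b c h1 h2 h3 => Stmt5.R3 s hp0 hq0 hsym1 hsym2 hreal hnullQ h1 h2 h3
  have hR4' : ∀ ⦃a b : Fin n⦄, a ≠ b → s a b a b = 0 :=
    fun a b h1 => Stmt5.R4 s hp0 hq0 hsym1 hsym2 hnullQ h1
  have hR5' : ∀ ⦃a b : Fin n⦄, a ≠ b → ∀ c, s a b c c = 0 :=
    fun a b h1 => Stmt5.R5 s hp0 hq0 hsym1 hsym2 hTR hR1' hnullQ h1
  have hZ := Stmt5.ZOFF s hsym1 hsym2 hR1' hR2' hR3' hR4' hR5'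
  have hR6 := Stmt5.R6 s hp0 hq0 hsym1 hsym2 hTR hZ hnullQ
  have hzero := Stmt5.s_all_zero s hsym1 hsym2 hZ hR6
  rw [← Stmt5.QP_top]
  unfold Stmt5.QP
  apply Finset.sum_eq_zero
  intro t _
  rw [Set.indicator_of_mem (show t ∈ {t : Stmt5.Tup n | True} from trivial)]
  rw [hzero, zero_mul]

end
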